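/- arXiv:math/0609051 — 6 statements merged into one kernel-verified Lean document; each statement's English description precedes it below -/
import Mathlib

section
/- Reduction formula (Equation 5). For all integers n ≥ 1, all integers a, b with 0 ≤ a ≤ b, and every integer m: N_{[−a,b]}(n,m) = N_{[0, b−a]}(n, m − (n−1)a). -/
open Finset

/-- `latticeCount a b n m` is `N_{[a,b]}(n,m)`: the number of maps `x : {1, …, n} → ℤ` with
`1 ≤ x i ≤ m` for all `i` and `x j ≠ x i + g` for all `i < j` and all gains `g` with
`a ≤ g ≤ b`.  Equivalently, the number of integer points of the cube `[1, m]^n` lying on none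
of the affinographic hyperplanes `x j = x i + g` (`i < j`, `a ≤ g ≤ b`). -/
noncomputable def latticeCount (a b : ℤ) (n : ℕ) (m : ℤ) : ℕ :=
  Nat.card {x : Fin n → ℤ // (∀ v, 1 ≤ x v ∧ x v ≤ m) ∧
    ∀ i j : Fin n, i < j → ∀ g : ℤ, a ≤ g → g ≤ b → x j ≠ x i + g}

/-- `eulerianNumber n r` is the Eulerian number `A(n, r + 1)`: the number of permutations `σ`
of `{1, …, n}` with exactly `r` ascents, an ascent being an index `1 ≤ i ≤ n − 1` with
`σ(i) < σ(i+1)`. -/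
noncomputable def eulerianNumber (n r : ℕ) : ℕ :=
  Nat.card {σ : Equiv.Perm (Fin n) //
    Nat.card {i : ℕ // ∃ h1 : i + 1 < n,
      σ ⟨i, Nat.lt_of_succ_lt h1⟩ < σ ⟨i + 1, h1⟩} = r}

/-- The binomial coefficient `C(t, n)` for an integer `t`, interpreted as `0` when `t < n`
(in particular when `t < 0`). -/
def intChoose (t : ℤ) (n : ℕ) : ℕ := t.toNat.choose n

namespace RA

variable {n : ℕ}

/-- rank of `i`: number of indices with strictly smaller value -/
def rk (x : Fin n → ℤ) (i : Fin n) : ℕ := (univ.filter fun k => x k < x i).card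

/-- indices whose value lies in `[x i, x j]` -/
def seg (x : Fin n → ℤ) (i j : Fin n) : Finset (Fin n) :=
  univ.filter fun k => x i ≤ x k ∧ x k ≤ x j

lemma ediv_lt_ediv' {c u v : ℤ} (hc : 0 < c) (h : u + c ≤ v) : u / c < v / c := by
  have h1 : (u + c) / c ≤ v / c := Int.ediv_le_ediv hc h
  have h2 : (u + c) / c = u / c + 1 := by
    have := Int.add_mul_ediv_right u 1 (by omega : c ≠ 0)
    simpa using this
  omega

lemma mul_ediv_le' {c t : ℤ} (hc : 0 < c) : c * (t / c) ≤ t := by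
  have h1 := Int.mul_ediv_add_emod t c
  have h2 := Int.emod_nonneg t (by omega : c ≠ 0)
  linarith

lemma sep_count {c : ℤ} (hc : 0 < c) {x : Fin n → ℤ} (hinj : Function.Injective x)
    (hsep : ∀ k l : Fin n, x k < x l → x k + c ≤ x l) {i j : Fin n} (hij : x i ≤ x j) :
    c * (((seg x i j).card : ℤ) - 1) ≤ x j - x i := by
  classical
  have hq : ∀ k ∈ seg x i j,
      ((x k - x i) / c).toNat ∈ Finset.range (((x j - x i) / c).toNat + 1) := by
    intro k hk
    simp only [seg, mem_filter, mem_univ, true_and] at hk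
    have h1 : (x k - x i) / c ≤ (x j - x i) / c := Int.ediv_le_ediv hc (by omega)
    have h2 : 0 ≤ (x k - x i) / c := Int.ediv_nonneg (by omega) hc.le
    have h3 : 0 ≤ (x j - x i) / c := Int.ediv_nonneg (by omega) hc.le
    rw [Finset.mem_range]
    omega
  have hinj2 : Set.InjOn (fun k => ((x k - x i) / c).toNat) (seg x i j) := by
    intro k hk l hl hkl
    by_contra hne
    simp only [coe_filter, Set.mem_setOf_eq, seg, mem_filter, mem_univ, true_and] at hk hl
    have hxne : x k ≠ x l := fun h => hne (hinj h)
    have key : ∀ u v : Fin n, x u < x v → x i ≤ x u → (x u - x i) / c < (x v - x i) / c :=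
      fun u v huv hu => ediv_lt_ediv' hc (by have := hsep u v huv; omega)
    rcases lt_or_gt_of_ne hxne with h | h
    · have h1 := key k l h hk.1
      have h2 : 0 ≤ (x k - x i) / c := Int.ediv_nonneg (by omega) hc.le
      simp only at hkl
      omega
    · have h1 := key l k h hl.1
      have h2 : 0 ≤ (x l - x i) / c := Int.ediv_nonneg (by omega) hc.le
      simp only at hkl
      omega
  have hcard := Finset.card_le_card_of_injOn _ hq hinj2
  rw [Finset.card_range] at hcard
  have h3 : 0 ≤ (x j - x i) / c := Int.ediv_nonneg (by omega) hc.le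
  have h4 : ((seg x i j).card : ℤ) - 1 ≤ (x j - x i) / c := by omega
  calc c * (((seg x i j).card : ℤ) - 1) ≤ c * ((x j - x i) / c) :=
        mul_le_mul_of_nonneg_left h4 hc.le
    _ ≤ x j - x i := mul_ediv_le' hc





lemma two_le_seg {x : Fin n → ℤ} {i j : Fin n} (hne : i ≠ j) (hx : x i ≤ x j) :
    2 ≤ (seg x i j).card := by
  have hi : i ∈ seg x i j := by simp [seg]; exact hx
  have hj : j ∈ seg x i j := by simp [seg]; exact hx
  exact Finset.one_lt_card.mpr ⟨i, hi, j, hj, hne⟩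

lemma seg_card_of_lt {x : Fin n → ℤ} (hinj : Function.Injective x) {i j : Fin n}
    (hx : x i < x j) : (seg x i j).card + rk x i = rk x j + 1 := by
  classical
  have h1 : (univ.filter fun k => x k ≤ x j) = insert j (univ.filter fun k => x k < x j) := by
    ext k
    simp only [mem_filter, mem_univ, true_and, mem_insert]
    constructor
    · intro h
      rcases eq_or_lt_of_le h with h | h
      · exact Or.inl (hinj h)
      · exact Or.inr h
    · rintro (rfl | h) <;> omega
  have h2 : (univ.filter fun k => x k ≤ x j)
      = (univ.filter fun k => x k < x i) ∪ seg x i j := by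
    rw [seg, ← Finset.filter_or]
    apply Finset.filter_congr
    intro k _
    constructor
    · intro h; omega
    · intro h; omega
  have hdisj : Disjoint (univ.filter fun k => x k < x i) (seg x i j) := by
    rw [Finset.disjoint_left]
    intro k hk hk2
    simp only [mem_filter, mem_univ, true_and] at hk
    simp only [seg, mem_filter, mem_univ, true_and] at hk2
    omega
  have hc1 : (univ.filter fun k => x k ≤ x j).card = rk x j + 1 := by
    rw [h1, Finset.card_insert_of_notMem (by simp)]; rfl
  have hc2 : (univ.filter fun k => x k ≤ x j).card = rk x i + (seg x i j).card := by
    rw [h2, Finset.card_union_of_disjoint hdisj]; rfl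
  unfold rk at *
  omega

lemma rk_min {x : Fin n → ℤ} {i0 : Fin n} (hmin : ∀ k, x i0 ≤ x k) : rk x i0 = 0 := by
  unfold rk
  rw [Finset.card_eq_zero, Finset.filter_eq_empty_iff]
  intro k _
  exact not_lt.mpr (hmin k)

lemma rk_max {x : Fin n → ℤ} (hinj : Function.Injective x) {i1 : Fin n}
    (hmax : ∀ k, x k ≤ x i1) : rk x i1 + 1 = n := by
  unfold rk
  have h : (univ.filter fun k => x k < x i1) = univ.erase i1 := by
    ext k
    simp only [mem_filter, mem_univ, true_and, mem_erase, and_true]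
    constructor
    · intro h hk; subst hk; exact lt_irrefl _ h
    · intro h
      rcases eq_or_lt_of_le (hmax k) with h2 | h2
      · exact absurd (hinj h2) h
      · exact h2
  rw [h, Finset.card_erase_of_mem (mem_univ _), Finset.card_univ, Fintype.card_fin]
  have : 0 < n := i1.pos
  omega

lemma rk_card_min {x : Fin n → ℤ} (hinj : Function.Injective x) {i0 : Fin n}
    (hmin : ∀ k, x i0 ≤ x k) (i : Fin n) : (seg x i0 i).card = rk x i + 1 := by
  have h1 : seg x i0 i = insert i (univ.filter fun k => x k < x i) := by
    ext k
    simp only [seg, mem_filter, mem_univ, true_and, mem_insert]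
    constructor
    · rintro ⟨-, h⟩
      rcases eq_or_lt_of_le h with h | h
      · exact Or.inl (hinj h)
      · exact Or.inr h
    · rintro (rfl | h)
      · exact ⟨hmin k, le_refl _⟩
      · exact ⟨hmin k, h.le⟩
  rw [h1, Finset.card_insert_of_notMem (by simp)]
  rfl

lemma rk_card_max {x : Fin n → ℤ} {i1 : Fin n} (hmax : ∀ k, x k ≤ x i1) (i : Fin n) :
    (seg x i i1).card + rk x i = n := by
  classical
  have h1 : seg x i i1 = univ.filter fun k => ¬ x k < x i := by
    ext k
    simp only [seg, mem_filter, mem_univ, true_and, not_lt]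
    exact ⟨fun h => h.1, fun h => ⟨h, hmax k⟩⟩
  rw [h1]
  have := Finset.card_filter_add_card_filter_not (s := (univ : Finset (Fin n)))
    (p := fun k => x k < x i)
  rw [Finset.card_univ, Fintype.card_fin] at this
  unfold rk
  omega

lemma rk_lt {x : Fin n → ℤ} (i : Fin n) : rk x i < n := by
  unfold rk
  have h : (univ.filter fun k => x k < x i) ⊂ univ := by
    rw [Finset.ssubset_univ_iff]
    intro h
    have hi : i ∈ univ.filter fun k => x k < x i := by rw [h]; exact mem_univ i
    simp at hi
  have := Finset.card_lt_card h
  rwa [Finset.card_univ, Fintype.card_fin] at this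

lemma rk_congr {x y : Fin n → ℤ} (h : ∀ k l, x k < x l ↔ y k < y l) : rk x = rk y := by
  funext i
  unfold rk
  congr 1
  apply Finset.filter_congr
  intro k _
  exact h k i

lemma rk_mono {y : Fin n → ℤ} {u v : Fin n} (h : y u ≤ y v) : rk y u ≤ rk y v := by
  apply Finset.card_le_card
  intro k hk
  simp only [mem_filter, mem_univ, true_and] at hk ⊢
  omega




lemma chain_bound {c1 c2 : ℤ} (hc2 : 0 < c2) (hc12 : c2 ≤ c1) {x : Fin n → ℤ}
    (hinj : Function.Injective x)
    (hup : ∀ k l : Fin n, k < l → x k < x l → x k + c1 ≤ x l)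
    (hdn : ∀ k l : Fin n, k < l → x l < x k → x l + c2 ≤ x k)
    {i j : Fin n} (hij : i < j) (hx : x i < x j) :
    c1 + c2 * (((seg x i j).card : ℤ) - 2) ≤ x j - x i := by
  classical
  set S := seg x i j with hS
  set D := S.card with hD
  have hiS : i ∈ S := by simp [hS, seg]; exact hx.le
  have hjS : j ∈ S := by simp [hS, seg]; exact hx.le
  have hD2 : 2 ≤ D := Finset.one_lt_card.mpr ⟨i, hiS, j, hjS, Fin.ne_of_lt hij⟩
  set T := S.image x with hT
  have hDT : T.card = D := Finset.card_image_of_injOn hinj.injOn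
  let e := T.orderIsoOfFin hDT
  let v : ℕ → ℤ := fun k => if h : k < D then (e ⟨k, h⟩ : ℤ) else x j
  have hvmono : ∀ k l, (hk : k < D) → (hl : l < D) → k < l → v k < v l := by
    intro k l hk hl hkl
    simp only [v, dif_pos hk, dif_pos hl]
    exact_mod_cast Subtype.coe_lt_coe.mpr (e.strictMono (by simp [Fin.lt_def]; omega))
  have hvT : ∀ k, (hk : k < D) → v k ∈ T := by
    intro k hk
    simp only [v, dif_pos hk]
    exact (e ⟨k, hk⟩).2
  have hTmem : ∀ t ∈ T, x i ≤ t ∧ t ≤ x j := by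
    intro t ht
    obtain ⟨u, hu, rfl⟩ := Finset.mem_image.mp ht
    simp only [hS, seg, mem_filter, mem_univ, true_and] at hu
    exact hu
  have h0D : 0 < D := by omega
  have hD1 : D - 1 < D := by omega
  have hxiT : x i ∈ T := Finset.mem_image_of_mem x hiS
  have hxjT : x j ∈ T := Finset.mem_image_of_mem x hjS
  have hv0 : v 0 = x i := by
    have h1 : x i ≤ v 0 := (hTmem _ (hvT 0 h0D)).1
    obtain ⟨kk, hkk⟩ : ∃ kk : Fin D, ((e kk : ℤ)) = x i := ⟨e.symm ⟨x i, hxiT⟩, by simp⟩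
    have h2 : v 0 ≤ (e kk : ℤ) := by
      simp only [v, dif_pos h0D]
      exact Subtype.coe_le_coe.mpr (e.monotone (by simp [Fin.le_def]))
    omega
  have hvD : v (D - 1) = x j := by
    have h1 : v (D - 1) ≤ x j := (hTmem _ (hvT _ hD1)).2
    obtain ⟨kk, hkk⟩ : ∃ kk : Fin D, ((e kk : ℤ)) = x j := ⟨e.symm ⟨x j, hxjT⟩, by simp⟩
    have h2 : (e kk : ℤ) ≤ v (D - 1) := by
      simp only [v, dif_pos hD1]
      exact Subtype.coe_le_coe.mpr (e.monotone (by simp [Fin.le_def]; omega))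
    omega
  -- choose index representatives
  have hio : ∀ k, k < D → ∃ u : Fin n, x u = v k := by
    intro k hk
    obtain ⟨u, _, hxu⟩ := Finset.mem_image.mp (hvT k hk)
    exact ⟨u, hxu⟩
  let ι : ℕ → Fin n := fun k => if h : ∃ u : Fin n, x u = v k then h.choose else i
  have hι : ∀ k, k < D → x (ι k) = v k := by
    intro k hk
    have h := hio k hk
    simp only [ι, dif_pos h]
    exact h.choose_spec
  have hι0 : ι 0 = i := hinj (by rw [hι 0 h0D, hv0])
  have hιD : ι (D - 1) = j := hinj (by rw [hι _ hD1, hvD])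
  -- there is an ascent
  have hexists : ∃ k0, k0 < D - 1 ∧ ι k0 < ι (k0 + 1) := by
    by_contra hcon
    push_neg at hcon
    have hdesc : ∀ k, k < D - 1 → ι (k + 1) < ι k := by
      intro k hk
      have hv : v k < v (k + 1) := hvmono k (k + 1) (by omega) (by omega) (by omega)
      have hne : ι (k + 1) ≠ ι k := by
        intro h
        have := hι k (by omega)
        have h2 := hι (k + 1) (by omega)
        rw [h] at h2
        omega
      exact lt_of_le_of_ne (hcon k hk) hne
    have key : ∀ k, k ≤ D - 1 → 0 < k → ι k < ι 0 := by
      intro k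
      induction k with
      | zero => intro _ h; exact absurd h (lt_irrefl 0)
      | succ p ih =>
        intro hk _
        have hd := hdesc p (by omega)
        rcases Nat.eq_zero_or_pos p with hp | hp
        · subst hp; exact hd
        · exact lt_trans hd (ih (by omega) hp)
    have := key (D - 1) (le_refl _) (by omega)
    rw [hι0, hιD] at this
    exact absurd this (not_lt.mpr hij.le)
  obtain ⟨k0, hk0, hasc⟩ := hexists
  -- telescoping sum
  have htel : ∑ k ∈ Finset.range (D - 1), (v (k + 1) - v k) = v (D - 1) - v 0 :=
    Finset.sum_range_sub v (D - 1)
  have hterm : ∀ k ∈ Finset.range (D - 1), (if k = k0 then c1 else c2) ≤ v (k + 1) - v k := by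
    intro k hk
    rw [Finset.mem_range] at hk
    have hk1 : k < D := by omega
    have hk2 : k + 1 < D := by omega
    have hv : v k < v (k + 1) := hvmono k (k + 1) hk1 hk2 (by omega)
    have hxk : x (ι k) = v k := hι k hk1
    have hxk1 : x (ι (k + 1)) = v (k + 1) := hι (k + 1) hk2
    by_cases hcase : ι k < ι (k + 1)
    · have := hup _ _ hcase (by rw [hxk, hxk1]; exact hv)
      rw [hxk, hxk1] at this
      split <;> omega
    · have hne : ι (k + 1) ≠ ι k := by
        intro h; rw [h] at hxk1; omega
      have hgt : ι (k + 1) < ι k := lt_of_le_of_ne (not_lt.mp hcase) hne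
      have := hdn _ _ hgt (by rw [hxk, hxk1]; exact hv)
      rw [hxk, hxk1] at this
      have hkk0 : k ≠ k0 := by
        intro h; subst h; exact absurd hasc hcase
      rw [if_neg hkk0]
      omega
  have hsum1 : ∑ k ∈ Finset.range (D - 1), (if k = k0 then c1 else c2) ≤ x j - x i := by
    calc _ ≤ ∑ k ∈ Finset.range (D - 1), (v (k + 1) - v k) := Finset.sum_le_sum hterm
      _ = x j - x i := by rw [htel, hv0, hvD]
  have hsum2 : ∑ k ∈ Finset.range (D - 1), (if k = k0 then c1 else c2)
      = c1 + c2 * ((D : ℤ) - 2) := by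
    have h1 : ∀ k, (if k = k0 then c1 else c2) = (if k = k0 then c1 - c2 else 0) + c2 := by
      intro k; split <;> ring
    calc ∑ k ∈ Finset.range (D - 1), (if k = k0 then c1 else c2)
        = ∑ k ∈ Finset.range (D - 1), ((if k = k0 then c1 - c2 else 0) + c2) :=
          Finset.sum_congr rfl fun k _ => h1 k
      _ = (∑ k ∈ Finset.range (D - 1), if k = k0 then c1 - c2 else 0)
            + (D - 1 : ℕ) * c2 := by
          rw [Finset.sum_add_distrib, Finset.sum_const, Finset.card_range, nsmul_eq_mul]
      _ = (c1 - c2) + (D - 1 : ℕ) * c2 := by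
          rw [Finset.sum_ite_eq' (Finset.range (D - 1)) k0 (fun _ => c1 - c2),
            if_pos (Finset.mem_range.mpr hk0)]
      _ = c1 + c2 * ((D : ℤ) - 2) := by
          have : ((D - 1 : ℕ) : ℤ) = (D : ℤ) - 1 := by
            have : 1 ≤ D := by omega
            omega
          rw [this]; ring
  rw [← hsum2]
  exact hsum1






/-- the common shape of the counting condition -/
def cond (lo hi m : ℤ) (x : Fin n → ℤ) : Prop :=
  (∀ v, 1 ≤ x v ∧ x v ≤ m) ∧
    ∀ i j : Fin n, i < j → ∀ g : ℤ, lo ≤ g → g ≤ hi → x j ≠ x i + g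

lemma nocoll_iff {lo hi s t : ℤ} :
    (∀ g : ℤ, lo ≤ g → g ≤ hi → t ≠ s + g) ↔ (t - s < lo ∨ hi < t - s) := by
  constructor
  · intro h
    by_contra hc
    push_neg at hc
    exact h (t - s) hc.1 hc.2 (by ring)
  · intro h g h1 h2 he
    omega

lemma gaps_inj {x : Fin n → ℤ} {lo hi : ℤ} (hlo : lo ≤ 0) (hhi : 0 ≤ hi)
    (h : ∀ i j : Fin n, i < j → x j - x i < lo ∨ hi < x j - x i) :
    Function.Injective x := by
  intro u v huv
  rcases lt_trichotomy u v with h' | h' | h'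
  · rcases h u v h' with h2 | h2 <;> omega
  · exact h'
  · rcases h v u h' with h2 | h2 <;> omega

def Fmap (a : ℤ) (x : Fin n → ℤ) : Fin n → ℤ := fun i => x i - a * rk x i
def Gmap (a : ℤ) (y : Fin n → ℤ) : Fin n → ℤ := fun i => y i + a * rk y i

lemma mapsA {a b m : ℤ} (ha : 0 ≤ a) (hab : a ≤ b) {x : Fin n → ℤ}
    (hx : cond (-a) b m x) :
    cond 0 (b - a) (m - ((n : ℤ) - 1) * a) (Fmap a x) ∧
      ∀ k l, x k < x l ↔ Fmap a x k < Fmap a x l := by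
  obtain ⟨hbd, hcol⟩ := hx
  have gaps : ∀ i j : Fin n, i < j → x j - x i < -a ∨ b < x j - x i := by
    intro i j hij
    exact nocoll_iff.mp (fun g h1 h2 => hcol i j hij g h1 h2)
  have hinj : Function.Injective x := gaps_inj (by omega) (by omega) gaps
  have hup : ∀ k l : Fin n, k < l → x k < x l → x k + (b + 1) ≤ x l := by
    intro k l h1 h2; rcases gaps k l h1 with h | h <;> omega
  have hdn : ∀ k l : Fin n, k < l → x l < x k → x l + (a + 1) ≤ x k := by
    intro k l h1 h2; rcases gaps k l h1 with h | h <;> omega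
  have hsep : ∀ k l : Fin n, x k < x l → x k + (a + 1) ≤ x l := by
    intro k l h
    rcases lt_trichotomy k l with h' | h' | h'
    · have := hup k l h' h; omega
    · rw [h'] at h; exact absurd h (lt_irrefl _)
    · have := hdn l k h' h; omega
  have ha1 : (0 : ℤ) < a + 1 := by omega
  have hmono : ∀ k l, x k < x l → Fmap a x k < Fmap a x l := by
    intro k l h
    have hD := seg_card_of_lt hinj h
    have hsc := sep_count ha1 hinj hsep h.le
    have hD2 : 2 ≤ (seg x k l).card := two_le_seg (fun he => absurd (he ▸ h) (lt_irrefl _)) h.le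
    simp only [Fmap]
    have hrk : (rk x l : ℤ) = rk x k + (((seg x k l).card : ℤ) - 1) := by
      have : ((seg x k l).card : ℤ) + rk x k = rk x l + 1 := by exact_mod_cast hD
      omega
    nlinarith [hsc, hrk, (by exact_mod_cast hD2 : (2:ℤ) ≤ ((seg x k l).card : ℤ))]
  have hiff : ∀ k l, x k < x l ↔ Fmap a x k < Fmap a x l := by
    intro k l
    constructor
    · exact hmono k l
    · intro h
      rcases lt_trichotomy (x k) (x l) with h' | h' | h'
      · exact h'
      · exfalso
        have : k = l := hinj h'
        subst this
        exact absurd h (lt_irrefl _)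
      · exact absurd (hmono l k h') (by omega)
  refine ⟨⟨?_, ?_⟩, hiff⟩
  · -- bounds
    intro v
    obtain ⟨i0, -, hmin0⟩ := Finset.exists_min_image univ x ⟨v, mem_univ v⟩
    obtain ⟨i1, -, hmax0⟩ := Finset.exists_max_image univ x ⟨v, mem_univ v⟩
    have hmin : ∀ k, x i0 ≤ x k := fun k => hmin0 k (mem_univ k)
    have hmax : ∀ k, x k ≤ x i1 := fun k => hmax0 k (mem_univ k)
    have hr0 : (0 : ℤ) ≤ rk x v := Int.natCast_nonneg _
    constructor
    · -- lower bound
      have hlow : (a + 1) * (rk x v : ℤ) ≤ x v - x i0 := by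
        rcases eq_or_lt_of_le (hmin v) with h | h
        · have h0 : i0 = v := hinj h
          rw [← h0, rk_min hmin]
          simp
        · have hc := rk_card_min hinj hmin v
          have := sep_count ha1 hinj hsep h.le
          rw [hc] at this
          push_cast at this
          linarith
      have h1 : 1 ≤ x i0 := (hbd i0).1
      simp only [Fmap]
      nlinarith
    · -- upper bound
      have hhigh : (a + 1) * ((n : ℤ) - 1 - rk x v) ≤ x i1 - x v := by
        rcases eq_or_lt_of_le (hmax v) with h | h
        · have h0 : v = i1 := hinj h
          have := rk_max hinj hmax
          rw [h0]
          have h2 : (rk x i1 : ℤ) = (n : ℤ) - 1 := by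
            have : ((rk x i1 : ℕ) : ℤ) + 1 = n := by exact_mod_cast this
            omega
          rw [h2]
          simp
        · have hc := rk_card_max hmax v
          have hs := sep_count ha1 hinj hsep h.le
          have hrlt : rk x v < n := rk_lt v
          have hcz : ((seg x v i1).card : ℤ) = (n : ℤ) - rk x v := by
            have : ((seg x v i1).card : ℤ) + rk x v = n := by exact_mod_cast hc
            omega
          rw [hcz] at hs
          linarith
      have h1 : x i1 ≤ m := (hbd i1).2
      have hrlt : rk x v < n := rk_lt v
      have hrlt' : (rk x v : ℤ) ≤ (n : ℤ) - 1 := by omega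
      simp only [Fmap]
      nlinarith
  · -- collision condition
    intro i j hij
    rw [nocoll_iff]
    set y := Fmap a x with hy
    rcases lt_trichotomy (x i) (x j) with h | h | h
    · right
      have hD := seg_card_of_lt hinj h
      have hcb := chain_bound ha1 (by omega) hinj hup hdn hij h
      have hD2 : 2 ≤ (seg x i j).card := two_le_seg (Fin.ne_of_lt hij) h.le
      have hrk : (rk x j : ℤ) = rk x i + (((seg x i j).card : ℤ) - 1) := by
        have : ((seg x i j).card : ℤ) + rk x i = rk x j + 1 := by exact_mod_cast hD
        omega
      have hD2' : (2:ℤ) ≤ ((seg x i j).card : ℤ) := by exact_mod_cast hD2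
      simp only [hy, Fmap]
      nlinarith
    · exact absurd (hinj h) (Fin.ne_of_lt hij)
    · left
      have hD := seg_card_of_lt hinj h
      have hsc := sep_count ha1 hinj hsep h.le
      have hD2 : 2 ≤ (seg x j i).card := two_le_seg (Fin.ne_of_lt hij).symm h.le
      have hrk : (rk x i : ℤ) = rk x j + (((seg x j i).card : ℤ) - 1) := by
        have : ((seg x j i).card : ℤ) + rk x j = rk x i + 1 := by exact_mod_cast hD
        omega
      have hD2' : (2:ℤ) ≤ ((seg x j i).card : ℤ) := by exact_mod_cast hD2
      simp only [hy, Fmap]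
      nlinarith

lemma mapsB {a b m : ℤ} (ha : 0 ≤ a) (hab : a ≤ b) {y : Fin n → ℤ}
    (hy : cond 0 (b - a) (m - ((n : ℤ) - 1) * a) y) :
    cond (-a) b m (Gmap a y) ∧ ∀ k l, y k < y l ↔ Gmap a y k < Gmap a y l := by
  obtain ⟨hbd, hcol⟩ := hy
  have gaps : ∀ i j : Fin n, i < j → y j - y i < 0 ∨ b - a < y j - y i := by
    intro i j hij
    exact nocoll_iff.mp (fun g h1 h2 => hcol i j hij g h1 h2)
  have hinj : Function.Injective y := gaps_inj (by omega) (by omega) gaps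
  have hup : ∀ k l : Fin n, k < l → y k < y l → y k + (b - a + 1) ≤ y l := by
    intro k l h1 h2; rcases gaps k l h1 with h | h <;> omega
  have hdn : ∀ k l : Fin n, k < l → y l < y k → y l + 1 ≤ y k := by
    intro k l h1 h2; omega
  have hsep : ∀ k l : Fin n, y k < y l → y k + 1 ≤ y l := by
    intro k l h; omega
  have hone : (0 : ℤ) < 1 := one_pos
  have hmono : ∀ k l, y k < y l → Gmap a y k < Gmap a y l := by
    intro k l h
    have := rk_mono (y := y) (u := k) (v := l) h.le
    simp only [Gmap]
    have h2 : (rk y k : ℤ) ≤ rk y l := by exact_mod_cast this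
    nlinarith
  have hiff : ∀ k l, y k < y l ↔ Gmap a y k < Gmap a y l := by
    intro k l
    constructor
    · exact hmono k l
    · intro h
      rcases lt_trichotomy (y k) (y l) with h' | h' | h'
      · exact h'
      · exfalso
        have : k = l := hinj h'
        subst this
        exact absurd h (lt_irrefl _)
      · exact absurd (hmono l k h') (by omega)
  refine ⟨⟨?_, ?_⟩, hiff⟩
  · intro v
    have h1 := (hbd v).1
    have h2 := (hbd v).2
    have hr0 : (0 : ℤ) ≤ rk y v := Int.natCast_nonneg _
    have hrlt : rk y v < n := rk_lt v
    have hrlt' : (rk y v : ℤ) ≤ (n : ℤ) - 1 := by omega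
    constructor
    · simp only [Gmap]; nlinarith
    · simp only [Gmap]; nlinarith
  · intro i j hij
    rw [nocoll_iff]
    rcases lt_trichotomy (y i) (y j) with h | h | h
    · right
      have hD := seg_card_of_lt hinj h
      have hcb := chain_bound hone (by omega) hinj hup hdn hij h
      have hD2 : 2 ≤ (seg y i j).card := two_le_seg (Fin.ne_of_lt hij) h.le
      have hrk : (rk y j : ℤ) = rk y i + (((seg y i j).card : ℤ) - 1) := by
        have : ((seg y i j).card : ℤ) + rk y i = rk y j + 1 := by exact_mod_cast hD
        omega
      have hD2' : (2:ℤ) ≤ ((seg y i j).card : ℤ) := by exact_mod_cast hD2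
      simp only [Gmap]
      nlinarith
    · exact absurd (hinj h) (Fin.ne_of_lt hij)
    · left
      have hD := seg_card_of_lt hinj h
      have hsc := sep_count hone hinj hsep h.le
      have hD2 : 2 ≤ (seg y j i).card := two_le_seg (Fin.ne_of_lt hij).symm h.le
      have hrk : (rk y i : ℤ) = rk y j + (((seg y j i).card : ℤ) - 1) := by
        have : ((seg y j i).card : ℤ) + rk y j = rk y i + 1 := by exact_mod_cast hD
        omega
      have hD2' : (2:ℤ) ≤ ((seg y j i).card : ℤ) := by exact_mod_cast hD2
      simp only [Gmap]
      nlinarith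

lemma left_inv' {a : ℤ} {x : Fin n → ℤ}
    (hiff : ∀ k l, x k < x l ↔ Fmap a x k < Fmap a x l) : Gmap a (Fmap a x) = x := by
  have hr : rk (Fmap a x) = rk x := rk_congr (fun k l => (hiff k l).symm)
  funext i
  simp only [Gmap, Fmap, hr]
  ring

lemma right_inv' {a : ℤ} {y : Fin n → ℤ}
    (hiff : ∀ k l, y k < y l ↔ Gmap a y k < Gmap a y l) : Fmap a (Gmap a y) = y := by
  have hr : rk (Gmap a y) = rk y := rk_congr (fun k l => (hiff k l).symm)
  funext i
  simp only [Gmap, Fmap, hr]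
  ring


end RA

/-- **Reduction formula** (Equation 5).  For `n ≥ 1`, `0 ≤ a ≤ b`, and every integer `m`:
`N_{[−a, b]}(n, m) = N_{[0, b − a]}(n, m − (n − 1)a)`. -/
theorem reduction_formula (n : ℕ) (hn : 1 ≤ n) (a b : ℤ) (ha : 0 ≤ a) (hab : a ≤ b) (m : ℤ) :
    latticeCount (-a) b n m = latticeCount 0 (b - a) n (m - (n - 1) * a) := by
  unfold latticeCount
  apply Nat.card_congr
  exact {
    toFun := fun p => ⟨RA.Fmap a p.1, (RA.mapsA ha hab p.2).1⟩
    invFun := fun p => ⟨RA.Gmap a p.1, (RA.mapsB ha hab p.2).1⟩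
    left_inv := fun p => Subtype.ext (RA.left_inv' (RA.mapsA ha hab p.2).2)
    right_inv := fun p => Subtype.ext (RA.right_inv' (RA.mapsB ha hab p.2).2) }
end

section
/- Eulerian formula for gain interval [0,b] (Equation 6). For all integers n ≥ 1, b ≥ 1, and m ≥ 0: N_{[0,b]}(n,m) = ∑_{r=0}^{n−1} A(n, r+1) · C(m − b·r, n). -/
open Finset

/-! ### Auxiliary definitions and lemmas -/

section Aux

variable {n : ℕ}

/-- `σ` has an ascent at position `i` (0-indexed). -/
def ascAt (n : ℕ) (σ : Equiv.Perm (Fin n)) (i : ℕ) : Prop :=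
  ∃ h1 : i + 1 < n, σ ⟨i, Nat.lt_of_succ_lt h1⟩ < σ ⟨i + 1, h1⟩

/-- The number of ascents of `σ`. -/
noncomputable def ascCount (n : ℕ) (σ : Equiv.Perm (Fin n)) : ℕ :=
  Nat.card {i : ℕ // ascAt n σ i}

lemma eulerianNumber_eq (n r : ℕ) :
    eulerianNumber n r = Nat.card {σ : Equiv.Perm (Fin n) // ascCount n σ = r} := rfl

open Classical in
/-- The number of ascents of `σ` at positions `< k`. -/
noncomputable def ascBelow (n : ℕ) (σ : Equiv.Perm (Fin n)) (k : ℕ) : ℕ :=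
  ((Finset.range k).filter fun i => ascAt n σ i).card

open Classical in
lemma ascBelow_succ (σ : Equiv.Perm (Fin n)) (k : ℕ) :
    ascBelow n σ (k + 1) = ascBelow n σ k + (if ascAt n σ k then 1 else 0) := by
  unfold ascBelow
  rw [Finset.range_add_one, Finset.filter_insert]
  split
  · rw [Finset.card_insert_of_notMem (by simp)]
  · simp

lemma ascBelow_zero (σ : Equiv.Perm (Fin n)) : ascBelow n σ 0 = 0 := by
  simp [ascBelow]

open Classical in
lemma ascBelow_mono (σ : Equiv.Perm (Fin n)) : Monotone (ascBelow n σ) := by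
  intro k l h
  exact Finset.card_le_card (Finset.filter_subset_filter _ (Finset.range_subset_range.2 h))

open Classical in
lemma ascCount_eq_ascBelow (σ : Equiv.Perm (Fin n)) : ascCount n σ = ascBelow n σ n := by
  have hset : {i : ℕ | ascAt n σ i} =
      ↑((Finset.range n).filter fun i => ascAt n σ i) := by
    ext i
    simp only [Set.mem_setOf_eq, Finset.coe_filter, Finset.mem_range]
    exact ⟨fun h => ⟨Nat.lt_of_succ_lt h.1, h⟩, fun h => h.2⟩
  rw [ascCount, Nat.card_congr (Equiv.subtypeEquivRight (q := fun i =>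
      i ∈ (Finset.range n).filter fun i => ascAt n σ i) (fun i => by
    simp only [Finset.mem_filter, Finset.mem_range]
    exact ⟨fun h => ⟨Nat.lt_of_succ_lt h.1, h⟩, fun h => h.2⟩)),
    Nat.card_eq_fintype_card, Fintype.card_coe, ascBelow]

lemma ascBelow_last (σ : Equiv.Perm (Fin n)) (hn : 1 ≤ n) :
    ascBelow n σ (n - 1) = ascCount n σ := by
  rw [ascCount_eq_ascBelow,
    congrArg (ascBelow n σ) (show n = (n - 1) + 1 by omega), ascBelow_succ]
  have : ¬ ascAt n σ (n - 1) := by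
    rintro ⟨h1, -⟩
    omega
  simp [this]

lemma ascCount_lt (σ : Equiv.Perm (Fin n)) (hn : 1 ≤ n) : ascCount n σ < n := by
  classical
  rw [← ascBelow_last σ hn]
  have h1 : ascBelow n σ (n - 1) ≤ n - 1 := by
    classical
    exact le_trans (Finset.card_filter_le _ _) (by simp)
  omega

/-- A tuple in `ℤ` whose consecutive entries strictly increase is strictly monotone. -/
lemma strictMono_of_succ {f : Fin n → ℤ}
    (h : ∀ k : ℕ, ∀ hk : k + 1 < n, f ⟨k, Nat.lt_of_succ_lt hk⟩ < f ⟨k + 1, hk⟩) :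
    StrictMono f := by
  cases n with
  | zero => intro a; exact a.elim0
  | succ n =>
    rw [Fin.strictMono_iff_lt_succ]
    intro i
    exact h i.val (Nat.succ_lt_succ i.isLt)

/-- If `σ` has no ascent between `k` and `l`, then it is descending there. -/
lemma desc_of_no_ascent {σ : Equiv.Perm (Fin n)} {k l : ℕ} (hl : l < n) (hkl : k < l)
    (h : ∀ j, k ≤ j → j < l → ¬ ascAt n σ j) :
    σ ⟨l, hl⟩ < σ ⟨k, lt_trans hkl hl⟩ := by
  induction l, hkl using Nat.le_induction with
  | base =>
    have hna := h k le_rfl (Nat.lt_succ_self k)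
    simp only [ascAt, not_exists] at hna
    have h2 := hna hl
    have hne : σ ⟨k + 1, hl⟩ ≠ σ ⟨k, Nat.lt_of_succ_lt hl⟩ := by
      intro he
      have := σ.injective he
      simp only [Fin.mk.injEq] at this
      omega
    exact lt_of_le_of_ne (not_lt.1 h2) hne
  | succ l hkl ih =>
    have hln : l < n := Nat.lt_of_succ_lt hl
    have h1 : σ ⟨l + 1, hl⟩ < σ ⟨l, hln⟩ := by
      have hna := h l (by omega) (Nat.lt_succ_self l)
      simp only [ascAt, not_exists] at hna
      have h2 := hna hl
      have hne : σ ⟨l + 1, hl⟩ ≠ σ ⟨l, hln⟩ := by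
        intro he
        have := σ.injective he
        simp only [Fin.mk.injEq] at this
        omega
      exact lt_of_le_of_ne (not_lt.1 h2) hne
    exact lt_trans h1 (ih hln (fun j hj1 hj2 => h j hj1 (by omega)))

/-- The cube-avoidance condition. -/
def PCond (n : ℕ) (b m : ℤ) (x : Fin n → ℤ) : Prop :=
  (∀ v, 1 ≤ x v ∧ x v ≤ m) ∧
    ∀ i j : Fin n, i < j → ∀ g : ℤ, (0 : ℤ) ≤ g → g ≤ b → x j ≠ x i + g

open Classical in
/-- The sorted-tuple condition relative to a permutation `σ`. -/
def QCond (n : ℕ) (b m : ℤ) (σ : Equiv.Perm (Fin n)) (y : Fin n → ℤ) : Prop :=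
  (∀ v, 1 ≤ y v ∧ y v ≤ m) ∧
    ∀ k : ℕ, ∀ hk : k + 1 < n,
      y ⟨k, Nat.lt_of_succ_lt hk⟩ + (if ascAt n σ k then b + 1 else 1) ≤ y ⟨k + 1, hk⟩

lemma QCond.strictMono {b m : ℤ} (hb : 1 ≤ b) {σ : Equiv.Perm (Fin n)} {y : Fin n → ℤ}
    (hy : QCond n b m σ y) : StrictMono y := by
  apply strictMono_of_succ
  intro k hk
  have := hy.2 k hk
  split_ifs at this with h <;> linarith

lemma PCond_of_QCond {b m : ℤ} (hb : 1 ≤ b) {σ : Equiv.Perm (Fin n)} {y : Fin n → ℤ}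
    (hy : QCond n b m σ y) : PCond n b m (y ∘ σ.symm) := by
  have hsm : StrictMono y := hy.strictMono hb
  refine ⟨fun v => hy.1 _, ?_⟩
  intro i j hij g hg0 hgb hne
  simp only [Function.comp_apply] at hne
  set k := σ.symm i with hk
  set l := σ.symm j with hl2
  rcases lt_trichotomy k l with hkl | hkl | hkl
  · by_cases hasc : ∃ jj, k.val ≤ jj ∧ jj < l.val ∧ ascAt n σ jj
    · obtain ⟨jj, hj1, hj2, hj3⟩ := hasc
      obtain ⟨hjj, -⟩ := id hj3
      have g1 := hy.2 jj hjj
      rw [if_pos hj3] at g1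
      have g2 : y k ≤ y ⟨jj, Nat.lt_of_succ_lt hjj⟩ := hsm.monotone (by
        rw [Fin.le_def]; exact hj1)
      have g3 : y ⟨jj + 1, hjj⟩ ≤ y l := hsm.monotone (by
        rw [Fin.le_def]; exact hj2)
      linarith
    · push_neg at hasc
      have hdesc := desc_of_no_ascent l.isLt hkl
        (fun j hj1 hj2 h3 => hasc j hj1 hj2 h3)
      have : σ l < σ k := by
        have e1 : (⟨l.val, l.isLt⟩ : Fin n) = l := rfl
        have e2 : (⟨k.val, lt_trans hkl l.isLt⟩ : Fin n) = k := rfl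
        rwa [e1, e2] at hdesc
      rw [hk, hl2, Equiv.apply_symm_apply, Equiv.apply_symm_apply] at this
      exact absurd hij (not_lt.2 this.le)
  · have : i = j := by
      have := congrArg σ hkl
      rwa [hk, hl2, Equiv.apply_symm_apply, Equiv.apply_symm_apply] at this
    exact absurd this (ne_of_lt hij)
  · have := hsm hkl
    linarith

lemma QCond_of_PCond {b m : ℤ} (hb : 1 ≤ b) {x : Fin n → ℤ} (hx : PCond n b m x) :
    QCond n b m (Tuple.sort x) (x ∘ Tuple.sort x) := by
  have hinj : Function.Injective x := by
    intro i j hij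
    by_contra hne
    rcases lt_or_gt_of_ne hne with h | h
    · exact hx.2 i j h 0 le_rfl (by linarith) (by rw [add_zero, hij])
    · exact hx.2 j i h 0 le_rfl (by linarith) (by rw [add_zero, hij])
  have hmono : Monotone (x ∘ Tuple.sort x) := Tuple.monotone_sort x
  have hsm : StrictMono (x ∘ Tuple.sort x) :=
    hmono.strictMono_iff_injective.2 (hinj.comp (Equiv.injective _))
  refine ⟨fun v => hx.1 _, ?_⟩
  intro k hk
  set σ := Tuple.sort x with hσ
  have hlt2 : x (σ ⟨k, Nat.lt_of_succ_lt hk⟩) < x (σ ⟨k + 1, hk⟩) :=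
    hsm (Fin.mk_lt_mk.2 (Nat.lt_succ_self k))
  by_cases hasc : ascAt n σ k
  · rw [if_pos hasc]
    obtain ⟨h1, hlt⟩ := hasc
    by_contra hcon
    push_neg at hcon
    refine hx.2 (σ ⟨k, Nat.lt_of_succ_lt hk⟩) (σ ⟨k + 1, hk⟩) hlt
      (x (σ ⟨k + 1, hk⟩) - x (σ ⟨k, Nat.lt_of_succ_lt hk⟩))
      (by linarith)
      (by simp only [Function.comp_apply] at hcon; linarith) ?_
    ring
  · rw [if_neg hasc]
    have := hlt2
    simp only [Function.comp_apply] at this ⊢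
    omega

lemma sort_comp_symm {σ : Equiv.Perm (Fin n)} {y : Fin n → ℤ} (hsm : StrictMono y) :
    Tuple.sort (y ∘ σ.symm) = σ := by
  symm
  rw [Tuple.eq_sort_iff]
  constructor
  · have he : (y ∘ ⇑σ.symm) ∘ ⇑σ = y := by
      funext i
      simp
    rw [he]
    exact hsm.monotone
  · intro i j hij hf
    simp only [Function.comp_apply, Equiv.symm_apply_apply] at hf
    exact absurd (hsm.injective hf) (ne_of_lt hij)

lemma finite_QCond {b m : ℤ} (σ : Equiv.Perm (Fin n)) :
    Finite {y : Fin n → ℤ // QCond n b m σ y} := by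
  let F : {y : Fin n → ℤ // QCond n b m σ y} → (Fin n → (Finset.Icc (1 : ℤ) m)) :=
    fun y v => ⟨y.1 v, Finset.mem_Icc.2 ⟨(y.2.1 v).1, (y.2.1 v).2⟩⟩
  have hF : Function.Injective F := fun y1 y2 h =>
    Subtype.ext (funext fun v => congrArg Subtype.val (congrFun h v))
  exact Finite.of_injective F hF

/-- Counting strictly increasing integer tuples in `[1, M]`. -/
lemma card_strictMono_tuples (n : ℕ) (M : ℤ) :
    Nat.card {z : Fin n → ℤ // StrictMono z ∧ ∀ v, 1 ≤ z v ∧ z v ≤ M} =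
      M.toNat.choose n := by
  have e : {z : Fin n → ℤ // StrictMono z ∧ ∀ v, 1 ≤ z v ∧ z v ≤ M} ≃
      {s : Finset ℤ // s ∈ (Finset.Icc (1 : ℤ) M).powersetCard n} :=
    { toFun := fun z => ⟨Finset.image z.1 Finset.univ, by
        rw [Finset.mem_powersetCard]
        constructor
        · intro a ha
          simp only [Finset.mem_image] at ha
          obtain ⟨v, -, rfl⟩ := ha
          exact Finset.mem_Icc.2 ⟨(z.2.2 v).1, (z.2.2 v).2⟩
        · rw [Finset.card_image_of_injective _ z.2.1.injective, Finset.card_univ,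
            Fintype.card_fin]⟩
      invFun := fun s =>
        ⟨(s.1.orderEmbOfFin (Finset.mem_powersetCard.1 s.2).2 : Fin n → ℤ),
          (s.1.orderEmbOfFin (Finset.mem_powersetCard.1 s.2).2).strictMono,
          fun v => Finset.mem_Icc.1
            ((Finset.mem_powersetCard.1 s.2).1 (Finset.orderEmbOfFin_mem _ _ v))⟩
      left_inv := fun z => Subtype.ext
        ((Finset.orderEmbOfFin_unique _
          (fun v => Finset.mem_image_of_mem _ (Finset.mem_univ v)) z.2.1).symm)
      right_inv := fun s => Subtype.ext (by
        apply Finset.coe_injective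
        rw [Finset.coe_image, Finset.coe_univ, Set.image_univ,
          Finset.range_orderEmbOfFin]) }
  rw [Nat.card_congr e, Nat.card_eq_fintype_card, Fintype.card_coe,
    Finset.card_powersetCard, Int.card_Icc]
  congr 2
  omega

/-- Counting tuples satisfying `QCond` for a fixed permutation. -/
lemma card_QCond (hn : 1 ≤ n) {b m : ℤ} (hb : 1 ≤ b) (σ : Equiv.Perm (Fin n)) :
    Nat.card {y : Fin n → ℤ // QCond n b m σ y} =
      (m - b * (ascCount n σ : ℤ)).toNat.choose n := by
  set r : ℕ := ascCount n σ with hr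
  set M : ℤ := m - b * (r : ℤ) with hM
  have hb0 : (0 : ℤ) ≤ b := by linarith
  have key : ∀ y : Fin n → ℤ, QCond n b m σ y ↔
      (StrictMono (fun v : Fin n => y v - b * (ascBelow n σ v.val : ℤ)) ∧
        ∀ v, 1 ≤ y v - b * (ascBelow n σ v.val : ℤ) ∧
          y v - b * (ascBelow n σ v.val : ℤ) ≤ M) := by
    intro y
    constructor
    · intro hy
      have hz : StrictMono (fun v : Fin n => y v - b * (ascBelow n σ v.val : ℤ)) := by
        apply strictMono_of_succ
        intro k hk
        have hgap := hy.2 k hk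
        have hstep := ascBelow_succ σ k
        by_cases h : ascAt n σ k
        · rw [if_pos h] at hgap hstep
          simp only
          rw [hstep]
          push_cast
          linarith
        · rw [if_neg h] at hgap hstep
          simp only
          rw [hstep]
          push_cast
          linarith
      refine ⟨hz, fun v => ⟨?_, ?_⟩⟩
      · have h0 : (⟨0, hn⟩ : Fin n) ≤ v := by rw [Fin.le_def]; exact Nat.zero_le _
        have := hz.monotone h0
        simp only [ascBelow_zero] at this
        have h1 := (hy.1 ⟨0, hn⟩).1
        push_cast at this
        linarith
      · have hvle : v ≤ (⟨n - 1, by omega⟩ : Fin n) := by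
          rw [Fin.le_def]
          exact Nat.le_pred_of_lt v.isLt
        have := hz.monotone hvle
        simp only [ascBelow_last σ hn, ← hr] at this
        have h1 := (hy.1 ⟨n - 1, by omega⟩).2
        rw [hM]
        linarith
    · rintro ⟨hz, hbd⟩
      have hAr : ∀ v : Fin n, (ascBelow n σ v.val : ℤ) ≤ (r : ℤ) := by
        intro v
        have : ascBelow n σ v.val ≤ ascBelow n σ (n - 1) :=
          ascBelow_mono σ (Nat.le_pred_of_lt v.isLt)
        rw [ascBelow_last σ hn, ← hr] at this
        exact_mod_cast this
      constructor
      · intro v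
        have h1 := (hbd v).1
        have h2 := (hbd v).2
        have h3 : (0 : ℤ) ≤ b * (ascBelow n σ v.val : ℤ) :=
          mul_nonneg hb0 (by positivity)
        have h4 : b * (ascBelow n σ v.val : ℤ) ≤ b * (r : ℤ) :=
          mul_le_mul_of_nonneg_left (hAr v) hb0
        rw [hM] at h2
        constructor <;> linarith
      · intro k hk
        have hlt : (⟨k, Nat.lt_of_succ_lt hk⟩ : Fin n) < ⟨k + 1, hk⟩ :=
          Fin.mk_lt_mk.2 (Nat.lt_succ_self k)
        have := hz hlt
        simp only at this
        have hstep := ascBelow_succ σ k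
        by_cases h : ascAt n σ k
        · rw [if_pos h] at hstep ⊢
          rw [hstep] at this
          push_cast at this
          linarith
        · rw [if_neg h] at hstep ⊢
          rw [hstep] at this
          push_cast at this
          linarith
  have e2 : {y : Fin n → ℤ // QCond n b m σ y} ≃
      {z : Fin n → ℤ // StrictMono z ∧ ∀ v, 1 ≤ z v ∧ z v ≤ M} :=
    { toFun := fun y => ⟨fun v => y.1 v - b * (ascBelow n σ v.val : ℤ),
        (key y.1).1 y.2⟩
      invFun := fun z => ⟨fun v => z.1 v + b * (ascBelow n σ v.val : ℤ), by
        apply (key _).2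
        simp only [add_sub_cancel_right]
        exact z.2⟩
      left_inv := fun y => Subtype.ext (funext fun v => by ring)
      right_inv := fun z => Subtype.ext (funext fun v => by ring) }
  rw [Nat.card_congr e2, card_strictMono_tuples, hM]

end Aux

/-- **Eulerian formula for gain interval `[0, b]`** (Equation 6).  For `n ≥ 1`, `b ≥ 1`, and
`m ≥ 0`: `N_{[0,b]}(n, m) = ∑_{r=0}^{n−1} A(n, r+1) C(m − b r, n)`. -/
theorem eulerian_formula_nonneg (n : ℕ) (hn : 1 ≤ n) (b : ℤ) (hb : 1 ≤ b)
    (m : ℤ) (hm : 0 ≤ m) :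
    latticeCount 0 b n m =
      ∑ r ∈ Finset.range n, eulerianNumber n r * intChoose (m - b * r) n := by
  classical
  have e1 : {x : Fin n → ℤ // PCond n b m x} ≃
      Σ σ : Equiv.Perm (Fin n), {y : Fin n → ℤ // QCond n b m σ y} :=
    { toFun := fun x => ⟨Tuple.sort x.1, x.1 ∘ Tuple.sort x.1, QCond_of_PCond hb x.2⟩
      invFun := fun p => ⟨p.2.1 ∘ (p.1).symm, PCond_of_QCond hb p.2.2⟩
      left_inv := fun x => Subtype.ext (funext fun v => by
        simp)
      right_inv := fun p => by
        obtain ⟨σ, y, hy⟩ := p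
        have hσ : Tuple.sort (y ∘ σ.symm) = σ := sort_comp_symm (hy.strictMono hb)
        refine Sigma.subtype_ext hσ ?_
        show (y ∘ ⇑σ.symm) ∘ ⇑(Tuple.sort (y ∘ ⇑σ.symm)) = y
        rw [hσ]
        funext i
        simp }
  have hlc : latticeCount 0 b n m = Nat.card {x : Fin n → ℤ // PCond n b m x} := rfl
  haveI : ∀ σ : Equiv.Perm (Fin n), Fintype {y : Fin n → ℤ // QCond n b m σ y} :=
    fun σ => @Fintype.ofFinite _ (finite_QCond σ)
  rw [hlc, Nat.card_congr e1, Nat.card_eq_fintype_card, Fintype.card_sigma]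
  have key : ∀ σ : Equiv.Perm (Fin n),
      Fintype.card {y : Fin n → ℤ // QCond n b m σ y} =
        intChoose (m - b * (ascCount n σ : ℤ)) n := by
    intro σ
    rw [← Nat.card_eq_fintype_card, card_QCond hn hb σ]
    rfl
  simp_rw [key]
  rw [← Finset.sum_fiberwise_of_maps_to
    (fun σ _ => Finset.mem_range.2 (ascCount_lt σ hn))
    (fun σ => intChoose (m - b * (ascCount n σ : ℤ)) n)]
  refine Finset.sum_congr rfl fun r hr => ?_
  rw [Finset.sum_congr rfl (fun σ hσ => by rw [(Finset.mem_filter.1 hσ).2]),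
    Finset.sum_const, smul_eq_mul]
  congr 1
  rw [eulerianNumber_eq, Nat.card_eq_fintype_card, Fintype.card_subtype]
end

section
/- Eulerian formula for gain interval [−a,b]. For all integers n ≥ 1 and a, b with 0 ≤ a ≤ b (and a < b or a = b allowed), and every integer m: if m ≥ (n−1)a then N_{[−a,b]}(n,m) = ∑_{r=0}^{n−1} A(n, r+1) · C(m − (n−1)a − (b−a)·r, n), and if m < (n−1)a then N_{[−a,b]}(n,m) = 0. -/
open Finset

namespace EulerAux

open Classical in
noncomputable def ascF (n : ℕ) (σ : Equiv.Perm (Fin n)) : Finset ℕ :=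
  (Finset.range n).filter (fun i => ∃ h1 : i + 1 < n,
    σ ⟨i, Nat.lt_of_succ_lt h1⟩ < σ ⟨i + 1, h1⟩)

lemma mem_ascF {n : ℕ} {σ : Equiv.Perm (Fin n)} {i : ℕ} :
    i ∈ ascF n σ ↔ ∃ h1 : i + 1 < n, σ ⟨i, Nat.lt_of_succ_lt h1⟩ < σ ⟨i + 1, h1⟩ := by
  simp only [ascF, mem_filter, mem_range]
  exact ⟨fun h => h.2, fun h => ⟨Nat.lt_of_succ_lt h.1, h⟩⟩

lemma nat_card_asc (n : ℕ) (σ : Equiv.Perm (Fin n)) :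
    Nat.card {i : ℕ // ∃ h1 : i + 1 < n,
      σ ⟨i, Nat.lt_of_succ_lt h1⟩ < σ ⟨i + 1, h1⟩} = (ascF n σ).card := by
  have h : {i : ℕ | ∃ h1 : i + 1 < n, σ ⟨i, Nat.lt_of_succ_lt h1⟩ < σ ⟨i + 1, h1⟩}
      = ↑(ascF n σ) := by
    ext i; simp [mem_ascF]
  calc Nat.card {i : ℕ // ∃ h1 : i + 1 < n,
        σ ⟨i, Nat.lt_of_succ_lt h1⟩ < σ ⟨i + 1, h1⟩}
      = {i : ℕ | ∃ h1 : i + 1 < n, σ ⟨i, Nat.lt_of_succ_lt h1⟩ < σ ⟨i + 1, h1⟩}.ncard :=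
        Nat.card_coe_set_eq _
    _ = (ascF n σ).card := by rw [h, Set.ncard_coe_finset]

lemma ascF_subset {n : ℕ} (σ : Equiv.Perm (Fin n)) : ascF n σ ⊆ Finset.range (n - 1) := by
  intro i hi
  obtain ⟨h1, -⟩ := mem_ascF.mp hi
  exact Finset.mem_range.mpr (by omega)

lemma ascF_card_lt {n : ℕ} (hn : 1 ≤ n) (σ : Equiv.Perm (Fin n)) : (ascF n σ).card < n := by
  have := Finset.card_le_card (ascF_subset σ)
  rw [Finset.card_range] at this
  omega

noncomputable def cnt (n : ℕ) (σ : Equiv.Perm (Fin n)) (k : ℕ) : ℕ :=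
  ((ascF n σ).filter (· < k)).card

noncomputable def off (a b : ℤ) (n : ℕ) (σ : Equiv.Perm (Fin n)) (k : ℕ) : ℤ :=
  a * k + (b - a) * cnt n σ k

lemma cnt_zero (n : ℕ) (σ : Equiv.Perm (Fin n)) : cnt n σ 0 = 0 := by
  unfold cnt
  rw [Finset.filter_false_of_mem (fun i _ => by omega), Finset.card_empty]

lemma cnt_succ (n : ℕ) (σ : Equiv.Perm (Fin n)) (k : ℕ) :
    cnt n σ (k + 1) = cnt n σ k + if k ∈ ascF n σ then 1 else 0 := by
  classical
  unfold cnt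
  have h : ((ascF n σ).filter (· < k + 1)) =
      ((ascF n σ).filter (· < k)) ∪ ((ascF n σ).filter (· = k)) := by
    rw [← Finset.filter_or]
    apply Finset.filter_congr
    intro i _
    omega
  rw [h, Finset.card_union_of_disjoint, Finset.filter_eq']
  · split <;> simp
  · rw [Finset.disjoint_left]
    intro i hi hi'
    have h1 := (Finset.mem_filter.mp hi).2
    have h2 := (Finset.mem_filter.mp hi').2
    omega

lemma cnt_mono (n : ℕ) (σ : Equiv.Perm (Fin n)) {k l : ℕ} (h : k ≤ l) :
    cnt n σ k ≤ cnt n σ l := by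
  apply Finset.card_le_card
  intro i hi
  rw [Finset.mem_filter] at hi ⊢
  exact ⟨hi.1, by omega⟩

lemma cnt_top (n : ℕ) (σ : Equiv.Perm (Fin n)) {k : ℕ} (h : n - 1 ≤ k) :
    cnt n σ k = (ascF n σ).card := by
  unfold cnt
  congr 1
  apply Finset.filter_true_of_mem
  intro i hi
  have := Finset.mem_range.mp (ascF_subset σ hi)
  omega

lemma off_zero (a b : ℤ) (n : ℕ) (σ : Equiv.Perm (Fin n)) : off a b n σ 0 = 0 := by
  simp [off, cnt_zero]

lemma off_sub (a b : ℤ) (n : ℕ) (σ : Equiv.Perm (Fin n)) (k l : ℕ) :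
    off a b n σ l - off a b n σ k =
      a * ((l : ℤ) - (k : ℤ)) + (b - a) * ((cnt n σ l : ℤ) - (cnt n σ k : ℤ)) := by
  unfold off; ring

lemma off_mono {a b : ℤ} (ha : 0 ≤ a) (hab : a ≤ b) (n : ℕ) (σ : Equiv.Perm (Fin n))
    {k l : ℕ} (h : k ≤ l) : off a b n σ k ≤ off a b n σ l := by
  have h1 : (k : ℤ) ≤ (l : ℤ) := by exact_mod_cast h
  have h2 : (cnt n σ k : ℤ) ≤ (cnt n σ l : ℤ) := by exact_mod_cast cnt_mono n σ h
  nlinarith [off_sub a b n σ k l]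

lemma off_nonneg {a b : ℤ} (ha : 0 ≤ a) (hab : a ≤ b) (n : ℕ) (σ : Equiv.Perm (Fin n))
    (k : ℕ) : 0 ≤ off a b n σ k := by
  have := off_mono ha hab n σ (Nat.zero_le k)
  rwa [off_zero] at this

lemma off_diff_ge_a {a b : ℤ} (ha : 0 ≤ a) (hab : a ≤ b) (n : ℕ) (σ : Equiv.Perm (Fin n))
    {k l : ℕ} (h : k < l) : a ≤ off a b n σ l - off a b n σ k := by
  have h1' : (k : ℤ) < (l : ℤ) := by exact_mod_cast h
  have h1 : (1 : ℤ) ≤ (l : ℤ) - (k : ℤ) := by omega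
  have h2 : (cnt n σ k : ℤ) ≤ (cnt n σ l : ℤ) := by exact_mod_cast cnt_mono n σ h.le
  nlinarith [off_sub a b n σ k l]

end EulerAux

namespace EulerAux

lemma no_ascent_descending {n : ℕ} (σ : Equiv.Perm (Fin n)) :
    ∀ d k, ∀ hl : k + d < n, (∀ t, k ≤ t → t < k + d → t ∉ ascF n σ) →
      σ ⟨k + d, hl⟩ ≤ σ ⟨k, by omega⟩ := by
  intro d
  induction d with
  | zero => intro k hl _; exact le_of_eq rfl
  | succ d ih =>
    intro k hl h
    have h1 : σ ⟨k + d + 1, hl⟩ < σ ⟨k + d, by omega⟩ := by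
      have hna : (k + d) ∉ ascF n σ := h _ (by omega) (by omega)
      rw [mem_ascF] at hna
      push_neg at hna
      have h2 := hna (by omega : k + d + 1 < n)
      rcases lt_or_eq_of_le h2 with h' | h'
      · exact h'
      · exfalso
        have := σ.injective h'
        rw [Fin.mk.injEq] at this
        omega
    exact le_trans h1.le (ih k (by omega) (fun t ht ht' => h t ht (by omega)))

lemma exists_ascent {n : ℕ} (σ : Equiv.Perm (Fin n)) {k l : ℕ} (hk : k < l) (hl : l < n)
    (hσ : σ ⟨k, lt_trans hk hl⟩ < σ ⟨l, hl⟩) : cnt n σ k < cnt n σ l := by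
  classical
  have hex : ∃ t, k ≤ t ∧ t < l ∧ t ∈ ascF n σ := by
    by_contra hc
    push_neg at hc
    have := no_ascent_descending σ (l - k) k (by omega)
      (fun t ht ht' => hc t ht (by omega))
    have h2 : σ ⟨k + (l - k), by omega⟩ = σ ⟨l, hl⟩ :=
      congrArg σ (Fin.ext (show k + (l - k) = l by omega))
    rw [h2] at this
    exact absurd hσ (not_lt.mpr this)
  obtain ⟨t, ht1, ht2, ht3⟩ := hex
  apply Finset.card_lt_card
  constructor
  · intro i hi
    rw [Finset.mem_filter] at hi ⊢
    exact ⟨hi.1, by omega⟩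
  · intro hsub
    have : t ∈ (ascF n σ).filter (· < k) := hsub (Finset.mem_filter.mpr ⟨ht3, ht2⟩)
    have := (Finset.mem_filter.mp this).2
    omega

lemma off_diff_ge_b {a b : ℤ} (ha : 0 ≤ a) (hab : a ≤ b) {n : ℕ} (σ : Equiv.Perm (Fin n))
    {k l : ℕ} (hk : k < l) (hl : l < n)
    (hσ : σ ⟨k, lt_trans hk hl⟩ < σ ⟨l, hl⟩) : b ≤ off a b n σ l - off a b n σ k := by
  have h1' : (k : ℤ) < (l : ℤ) := by exact_mod_cast hk
  have h1 : (1 : ℤ) ≤ (l : ℤ) - (k : ℤ) := by omega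
  have h2 : (cnt n σ k : ℤ) + 1 ≤ (cnt n σ l : ℤ) := by
    exact_mod_cast exists_ascent σ hk hl hσ
  nlinarith [off_sub a b n σ k l]

lemma strictMono_of_succ {n : ℕ} {z : Fin n → ℤ}
    (h : ∀ t : ℕ, ∀ ht : t + 1 < n, z ⟨t, Nat.lt_of_succ_lt ht⟩ < z ⟨t + 1, ht⟩) :
    StrictMono z := by
  have key : ∀ d k, ∀ hl : k + d < n, 0 < d → z ⟨k, by omega⟩ < z ⟨k + d, hl⟩ := by
    intro d
    induction d with
    | zero => intro k hl hd; omega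
    | succ d ih =>
      intro k hl _
      rcases Nat.eq_zero_or_pos d with hd | hd
      · subst hd; exact h k hl
      · exact lt_trans (ih k (by omega) hd) (h (k + d) hl)
  intro k l hkl
  have hk := k.isLt
  have hl := l.isLt
  have hv : (k : ℕ) < (l : ℕ) := hkl
  have h2 : z ⟨(k : ℕ), by omega⟩ < z ⟨(k : ℕ) + ((l : ℕ) - (k : ℕ)), by omega⟩ :=
    key ((l : ℕ) - (k : ℕ)) (k : ℕ) (by omega) (by omega)
  have e1 : (⟨(k : ℕ), by omega⟩ : Fin n) = k := by ext; rfl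
  have e2 : (⟨(k : ℕ) + ((l : ℕ) - (k : ℕ)), by omega⟩ : Fin n) = l := by ext; simp; omega
  rwa [e1, e2] at h2

noncomputable def Mof (a b m : ℤ) (n : ℕ) (σ : Equiv.Perm (Fin n)) : ℤ :=
  m - a * ((n : ℤ) - 1) - (b - a) * (ascF n σ).card

lemma Mof_eq {a b m : ℤ} {n : ℕ} (hn : 1 ≤ n) (σ : Equiv.Perm (Fin n)) :
    Mof a b m n σ = m - off a b n σ (n - 1) := by
  unfold Mof off
  rw [cnt_top n σ (le_refl _)]
  have : ((n - 1 : ℕ) : ℤ) = (n : ℤ) - 1 := by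
    rw [Nat.cast_sub hn]; norm_num
  rw [this]; ring

end EulerAux

namespace EulerAux

noncomputable def chainEquiv (n : ℕ) (M : ℤ) :
    {z : Fin n → ℤ // StrictMono z ∧ ∀ k, 1 ≤ z k ∧ z k ≤ M} ≃
      ↥(Finset.powersetCard n (Finset.Icc (1 : ℤ) M)) where
  toFun z := ⟨Finset.image z.1 Finset.univ, by
    rw [Finset.mem_powersetCard]
    refine ⟨fun x hx => ?_, ?_⟩
    · obtain ⟨k, -, rfl⟩ := Finset.mem_image.mp hx
      exact Finset.mem_Icc.mpr (z.2.2 k)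
    · rw [Finset.card_image_of_injective _ z.2.1.injective, Finset.card_univ,
        Fintype.card_fin]⟩
  invFun s := ⟨⇑(Finset.orderEmbOfFin s.1 (Finset.mem_powersetCard.mp s.2).2),
    (Finset.orderEmbOfFin s.1 _).strictMono,
    fun k => Finset.mem_Icc.mp
      ((Finset.mem_powersetCard.mp s.2).1 (Finset.orderEmbOfFin_mem s.1 _ k))⟩
  left_inv z := by
    apply Subtype.ext
    exact (Finset.orderEmbOfFin_unique _
      (fun k => Finset.mem_image_of_mem _ (Finset.mem_univ k)) z.2.1).symm
  right_inv s := by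
    apply Subtype.ext
    apply Finset.coe_injective
    rw [Finset.coe_image, Finset.coe_univ, Set.image_univ, Finset.range_orderEmbOfFin]

lemma chain_card (n : ℕ) (M : ℤ) :
    Nat.card {z : Fin n → ℤ // StrictMono z ∧ ∀ k, 1 ≤ z k ∧ z k ≤ M} =
      M.toNat.choose n := by
  rw [Nat.card_congr (chainEquiv n M), Nat.card_eq_finsetCard,
    Finset.card_powersetCard, Int.card_Icc]
  norm_num

end EulerAux

namespace EulerAux

variable {n : ℕ} {a b m : ℤ}

lemma mem_inj (ha : 0 ≤ a) (hb : 0 ≤ b) {x : Fin n → ℤ}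
    (hx : ∀ i j : Fin n, i < j → ∀ g : ℤ, -a ≤ g → g ≤ b → x j ≠ x i + g) :
    Function.Injective x := by
  intro i j hij
  by_contra hne
  rcases lt_trichotomy i j with h | h | h
  · exact hx i j h 0 (by linarith) hb (by rw [add_zero]; exact hij.symm)
  · exact hne h
  · exact hx j i h 0 (by linarith) hb (by rw [add_zero]; exact hij)

noncomputable def PsiS (hn : 1 ≤ n) (ha : 0 ≤ a) (hab : a ≤ b) (m : ℤ) :
    (Σ σ : Equiv.Perm (Fin n),
      {z : Fin n → ℤ // StrictMono z ∧ ∀ k, 1 ≤ z k ∧ z k ≤ Mof a b m n σ}) →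
    {x : Fin n → ℤ // (∀ v, 1 ≤ x v ∧ x v ≤ m) ∧
      ∀ i j : Fin n, i < j → ∀ g : ℤ, -a ≤ g → g ≤ b → x j ≠ x i + g} :=
  fun p => ⟨fun i => p.2.1 (p.1⁻¹ i) + off a b n p.1 ((p.1⁻¹ i : Fin n) : ℕ), by
    obtain ⟨σ, z, hz1, hz2⟩ := p
    simp only
    constructor
    · intro v
      set k : Fin n := σ⁻¹ v with hk
      constructor
      · have h1 := (hz2 k).1
        have h2 := off_nonneg ha hab n σ (k : ℕ)
        linarith
      · have h1 := (hz2 k).2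
        have h2 : off a b n σ (k : ℕ) ≤ off a b n σ (n - 1) :=
          off_mono ha hab n σ (by have := k.isLt; omega)
        rw [Mof_eq hn] at h1
        linarith
    · intro i j hij g hg1 hg2
      set k : Fin n := σ⁻¹ i with hk
      set l : Fin n := σ⁻¹ j with hl
      rcases lt_trichotomy (k : ℕ) (l : ℕ) with hkl | hkl | hkl
      · -- ascending positions: σ k = i < j = σ l
        have hσ : σ ⟨(k : ℕ), k.isLt⟩ < σ ⟨(l : ℕ), l.isLt⟩ := by
          simp only [Fin.eta, hk, hl, Equiv.Perm.coe_inv, Equiv.apply_symm_apply]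
          exact hij
        have hb' := off_diff_ge_b ha hab σ hkl l.isLt hσ
        have hzkl : z k + 1 ≤ z l := by
          have : z k < z l := hz1 (by exact hkl)
          omega
        intro heq
        have : z l + off a b n σ (l : ℕ) = z k + off a b n σ (k : ℕ) + g := heq
        linarith
      · exfalso
        have hkl' : k = l := Fin.ext hkl
        rw [hk, hl] at hkl'
        exact absurd (σ⁻¹.injective hkl') hij.ne
      · -- descending positions
        have ha' := off_diff_ge_a ha hab n σ hkl
        have hzlk : z l + 1 ≤ z k := by
          have : z l < z k := hz1 (by exact hkl)
          omega
        intro heq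
        have h2 : z l + off a b n σ (l : ℕ) = z k + off a b n σ (k : ℕ) + g := heq
        linarith⟩

end EulerAux

namespace EulerAux

lemma psi_apply (hn : 1 ≤ n) (ha : 0 ≤ a) (hab : a ≤ b) (m : ℤ)
    (p : Σ σ : Equiv.Perm (Fin n),
      {z : Fin n → ℤ // StrictMono z ∧ ∀ k, 1 ≤ z k ∧ z k ≤ Mof a b m n σ})
    (t : Fin n) :
    (PsiS hn ha hab m p).1 (p.1 t) = p.2.1 t + off a b n p.1 (t : ℕ) := by
  show p.2.1 (p.1⁻¹ (p.1 t)) + off a b n p.1 ((p.1⁻¹ (p.1 t) : Fin n) : ℕ) = _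
  rw [Equiv.Perm.coe_inv, Equiv.symm_apply_apply]

lemma psi_comp_strictMono (hn : 1 ≤ n) (ha : 0 ≤ a) (hab : a ≤ b) (m : ℤ)
    (p : Σ σ : Equiv.Perm (Fin n),
      {z : Fin n → ℤ // StrictMono z ∧ ∀ k, 1 ≤ z k ∧ z k ≤ Mof a b m n σ}) :
    StrictMono ((PsiS hn ha hab m p).1 ∘ p.1) := by
  intro s t hst
  simp only [Function.comp_apply, psi_apply]
  have h1 : p.2.1 s < p.2.1 t := p.2.2.1 hst
  have h2 : off a b n p.1 (s : ℕ) ≤ off a b n p.1 (t : ℕ) :=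
    off_mono ha hab n p.1 (le_of_lt hst)
  linarith

lemma psi_injective (hn : 1 ≤ n) (ha : 0 ≤ a) (hab : a ≤ b) (m : ℤ) :
    Function.Injective (PsiS (n := n) (a := a) (b := b) hn ha hab m) := by
  intro p q hpq
  have hx : (PsiS hn ha hab m p).1 = (PsiS hn ha hab m q).1 := by rw [hpq]
  have hinj : Function.Injective (PsiS hn ha hab m p).1 :=
    mem_inj ha (ha.trans hab) (PsiS hn ha hab m p).2.2
  have hσ : p.1 = q.1 := by
    have hm1 : Monotone ((PsiS hn ha hab m p).1 ∘ p.1) :=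
      (psi_comp_strictMono hn ha hab m p).monotone
    have hm2 : Monotone ((PsiS hn ha hab m p).1 ∘ q.1) := by
      rw [hx]
      exact (psi_comp_strictMono hn ha hab m q).monotone
    have := Tuple.unique_monotone hm1 hm2
    exact Equiv.ext fun t => hinj (congrFun this t)
  obtain ⟨σ, z⟩ := p
  obtain ⟨σ', z'⟩ := q
  cases hσ
  apply congrArg (Sigma.mk σ)
  apply Subtype.ext
  funext t
  have h1 := psi_apply hn ha hab m ⟨σ, z⟩ t
  have h2 := psi_apply hn ha hab m ⟨σ, z'⟩ t
  rw [← hpq] at h2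
  have := h1.symm.trans h2
  linarith

lemma psi_surjective (hn : 1 ≤ n) (ha : 0 ≤ a) (hab : a ≤ b) (m : ℤ) :
    Function.Surjective (PsiS (n := n) (a := a) (b := b) hn ha hab m) := by
  rintro ⟨x, hx1, hx2⟩
  have hinj : Function.Injective x := mem_inj ha (ha.trans hab) hx2
  set σ : Equiv.Perm (Fin n) := Tuple.sort x with hσ
  have hmono : Monotone (x ∘ σ) := Tuple.monotone_sort x
  have hsm : StrictMono (x ∘ σ) :=
    hmono.strictMono_of_injective (hinj.comp σ.injective)
  set z : Fin n → ℤ := fun k => x (σ k) - off a b n σ (k : ℕ) with hz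
  have hzsm : StrictMono z := by
    apply strictMono_of_succ
    intro t ht
    have hle : x (σ ⟨t, Nat.lt_of_succ_lt ht⟩) ≤ x (σ ⟨t + 1, ht⟩) :=
      hmono (show (⟨t, Nat.lt_of_succ_lt ht⟩ : Fin n) ≤ ⟨t + 1, ht⟩ by
        simp [Fin.le_def])
    rcases lt_trichotomy (σ ⟨t, Nat.lt_of_succ_lt ht⟩) (σ ⟨t + 1, ht⟩) with h | h | h
    · -- ascent at t
      have hmem : t ∈ ascF n σ := mem_ascF.mpr ⟨ht, h⟩
      have hoff : off a b n σ (t + 1) = off a b n σ t + b := by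
        unfold off
        rw [cnt_succ, if_pos hmem]
        push_cast
        ring
      have hgap : x (σ ⟨t, Nat.lt_of_succ_lt ht⟩) + b + 1 ≤ x (σ ⟨t + 1, ht⟩) := by
        by_contra hc
        push_neg at hc
        exact hx2 _ _ h (x (σ ⟨t + 1, ht⟩) - x (σ ⟨t, Nat.lt_of_succ_lt ht⟩))
          (by linarith) (by linarith) (by ring_nf)
      show x (σ ⟨t, _⟩) - off a b n σ t < x (σ ⟨t + 1, ht⟩) - off a b n σ (t + 1)
      rw [hoff]
      linarith
    · exfalso
      have := σ.injective h
      rw [Fin.mk.injEq] at this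
      omega
    · -- descent at t
      have hmem : t ∉ ascF n σ := by
        intro hmem
        obtain ⟨h1, h2⟩ := mem_ascF.mp hmem
        exact absurd h2 (not_lt.mpr h.le)
      have hoff : off a b n σ (t + 1) = off a b n σ t + a := by
        unfold off
        rw [cnt_succ, if_neg hmem]
        push_cast
        ring
      have hgap : x (σ ⟨t, Nat.lt_of_succ_lt ht⟩) + a + 1 ≤ x (σ ⟨t + 1, ht⟩) := by
        by_contra hc
        push_neg at hc
        exact hx2 _ _ h (x (σ ⟨t, Nat.lt_of_succ_lt ht⟩) - x (σ ⟨t + 1, ht⟩))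
          (by linarith) (by linarith [ha.trans hab]) (by ring_nf)
      show x (σ ⟨t, _⟩) - off a b n σ t < x (σ ⟨t + 1, ht⟩) - off a b n σ (t + 1)
      rw [hoff]
      linarith
  have hbound : ∀ k, 1 ≤ z k ∧ z k ≤ Mof a b m n σ := by
    intro k
    have hbot : z ⟨0, by omega⟩ ≤ z k :=
      hzsm.monotone (show (⟨0, by omega⟩ : Fin n) ≤ k by simp [Fin.le_def])
    have htop : z k ≤ z ⟨n - 1, by omega⟩ :=
      hzsm.monotone (show k ≤ (⟨n - 1, by omega⟩ : Fin n) by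
        simp [Fin.le_def]; have := k.isLt; omega)
    constructor
    · have h0 : z ⟨0, by omega⟩ = x (σ ⟨0, by omega⟩) := by
        show x (σ ⟨0, _⟩) - off a b n σ ((0 : ℕ)) = _
        rw [off_zero]; ring
      have := (hx1 (σ ⟨0, by omega⟩)).1
      rw [h0] at hbot
      linarith
    · have h0 : z ⟨n - 1, by omega⟩ = x (σ ⟨n - 1, by omega⟩) - off a b n σ (n - 1) := rfl
      have := (hx1 (σ ⟨n - 1, by omega⟩)).2
      rw [Mof_eq hn]
      rw [h0] at htop
      linarith
  refine ⟨⟨σ, ⟨z, hzsm, hbound⟩⟩, ?_⟩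
  apply Subtype.ext
  funext i
  show z (σ⁻¹ i) + off a b n σ ((σ⁻¹ i : Fin n) : ℕ) = x i
  simp only [hz]
  rw [Equiv.Perm.coe_inv, Equiv.apply_symm_apply]
  ring

end EulerAux

namespace EulerAux

lemma main_count (hn : 1 ≤ n) (ha : 0 ≤ a) (hab : a ≤ b) (m : ℤ) :
    latticeCount (-a) b n m =
      ∑ σ : Equiv.Perm (Fin n), (Mof a b m n σ).toNat.choose n := by
  classical
  have hbij : Function.Bijective (PsiS (n := n) (a := a) (b := b) hn ha hab m) :=
    ⟨psi_injective hn ha hab m, psi_surjective hn ha hab m⟩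
  have h1 : latticeCount (-a) b n m =
      Nat.card (Σ σ : Equiv.Perm (Fin n),
        {z : Fin n → ℤ // StrictMono z ∧ ∀ k, 1 ≤ z k ∧ z k ≤ Mof a b m n σ}) :=
    (Nat.card_eq_of_bijective _ hbij).symm
  rw [h1, Nat.card_congr (Equiv.sigmaCongrRight
    (fun σ => chainEquiv n (Mof a b m n σ))), Nat.card_eq_fintype_card,
    Fintype.card_sigma]
  apply Finset.sum_congr rfl
  intro σ _
  rw [Fintype.card_coe, Finset.card_powersetCard, Int.card_Icc]
  norm_num

lemma eulerian_eq_filter (n r : ℕ) :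
    eulerianNumber n r =
      (Finset.univ.filter (fun σ : Equiv.Perm (Fin n) => (ascF n σ).card = r)).card := by
  classical
  unfold eulerianNumber
  have h1 : Nat.card {σ : Equiv.Perm (Fin n) //
      Nat.card {i : ℕ // ∃ h1 : i + 1 < n,
        σ ⟨i, Nat.lt_of_succ_lt h1⟩ < σ ⟨i + 1, h1⟩} = r} =
      Nat.card {σ : Equiv.Perm (Fin n) // (ascF n σ).card = r} :=
    Nat.card_congr (Equiv.subtypeEquivRight (fun σ => by rw [nat_card_asc]))
  rw [h1, Nat.card_eq_fintype_card, Fintype.card_subtype]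

end EulerAux


namespace EulerAux

lemma final_eq {n : ℕ} {a b : ℤ} (hn : 1 ≤ n) (ha : 0 ≤ a) (hab : a ≤ b) (m : ℤ) :
    latticeCount (-a) b n m = ∑ r ∈ Finset.range n, eulerianNumber n r *
      intChoose (m - ((n : ℤ) - 1) * a - (b - a) * r) n := by
  classical
  rw [main_count hn ha hab m]
  have hmap : ∀ σ ∈ (Finset.univ : Finset (Equiv.Perm (Fin n))),
      (ascF n σ).card ∈ Finset.range n :=
    fun σ _ => Finset.mem_range.mpr (ascF_card_lt hn σ)
  rw [← Finset.sum_fiberwise_of_maps_to hmap (fun σ => (Mof a b m n σ).toNat.choose n)]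
  apply Finset.sum_congr rfl
  intro r hr
  rw [eulerian_eq_filter]
  have hconst : ∀ σ ∈ Finset.univ.filter
      (fun σ : Equiv.Perm (Fin n) => (ascF n σ).card = r),
      (Mof a b m n σ).toNat.choose n =
        intChoose (m - ((n : ℤ) - 1) * a - (b - a) * r) n := by
    intro σ hσ
    have hc := (Finset.mem_filter.mp hσ).2
    unfold Mof intChoose
    rw [hc]
    congr 2
    ring
  rw [Finset.sum_congr rfl hconst, Finset.sum_const, smul_eq_mul]

lemma final_main (n : ℕ) (hn : 1 ≤ n) (a b : ℤ) (ha : 0 ≤ a) (hab : a ≤ b) (m : ℤ) :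
    (((n : ℤ) - 1) * a ≤ m →
      latticeCount (-a) b n m =
        ∑ r ∈ Finset.range n, eulerianNumber n r *
          intChoose (m - ((n : ℤ) - 1) * a - (b - a) * r) n) ∧
    (m < ((n : ℤ) - 1) * a → latticeCount (-a) b n m = 0) := by
  refine ⟨fun _ => final_eq hn ha hab m, fun hm => ?_⟩
  rw [final_eq hn ha hab m]
  apply Finset.sum_eq_zero
  intro r hr
  have hneg : m - ((n : ℤ) - 1) * a - (b - a) * r < 0 := by
    have h1 : (0 : ℤ) ≤ (b - a) * (r : ℤ) := mul_nonneg (by linarith) (by positivity)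
    linarith
  rw [intChoose, Int.toNat_of_nonpos hneg.le,
    Nat.choose_eq_zero_of_lt (show 0 < n from hn), mul_zero]

end EulerAux

/-- **Eulerian formula for gain interval `[−a, b]`.**  For `n ≥ 1` and `0 ≤ a ≤ b`:
if `m ≥ (n − 1)a` then
`N_{[−a,b]}(n, m) = ∑_{r=0}^{n−1} A(n, r+1) C(m − (n−1)a − (b−a) r, n)`,
and if `m < (n − 1)a` then `N_{[−a,b]}(n, m) = 0`. -/
theorem eulerian_formula_general (n : ℕ) (hn : 1 ≤ n) (a b : ℤ) (ha : 0 ≤ a) (hab : a ≤ b)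
    (m : ℤ) :
    (((n : ℤ) - 1) * a ≤ m →
      latticeCount (-a) b n m =
        ∑ r ∈ Finset.range n, eulerianNumber n r *
          intChoose (m - ((n : ℤ) - 1) * a - (b - a) * r) n) ∧
    (m < ((n : ℤ) - 1) * a → latticeCount (-a) b n m = 0) := by
  exact EulerAux.final_main n hn a b ha hab m
end

section
/- Shift formula (Equation 7). For all integers n ≥ 1, b ≥ 1, and every integer m ≥ n − 1: N_{[0,b]}(n,m) = N_{[1, b−1]}(n, m − n + 1). (When b = 1 the gain interval [1,0] is empty, so the right-hand side counts all maps x : {1,…,n} → {1,…,m−n+1} with no constraints.) -/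
open Finset

namespace ShiftFormulaAux

open Finset

variable {n : ℕ}

/-- Rank of index `i`: number of indices with strictly smaller value. -/
def rnk (x : Fin n → ℤ) (i : Fin n) : ℕ :=
  (univ.filter fun j => x j < x i).card

/-- `j` comes before `i` in the tie-broken order (ties broken by *larger* index first). -/
def bef (y : Fin n → ℤ) (j i : Fin n) : Prop :=
  y j < y i ∨ (y j = y i ∧ i < j)

instance (y : Fin n → ℤ) (j i : Fin n) : Decidable (bef y j i) := by
  unfold bef; infer_instance

def scnt (y : Fin n → ℤ) (i : Fin n) : ℕ :=
  (univ.filter fun j => bef y j i).card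

lemma bef_irrefl (y : Fin n → ℤ) (i : Fin n) : ¬ bef y i i := by
  simp [bef]

lemma bef_trans {y : Fin n → ℤ} {k j i : Fin n} (h1 : bef y k j) (h2 : bef y j i) :
    bef y k i := by
  rcases h1 with h1 | ⟨h1, h1'⟩ <;> rcases h2 with h2 | ⟨h2, h2'⟩
  · exact Or.inl (h1.trans h2)
  · exact Or.inl (h2 ▸ h1)
  · exact Or.inl (h1 ▸ h2)
  · exact Or.inr ⟨h1.trans h2, h2'.trans h1'⟩

lemma bef_total {y : Fin n → ℤ} {i j : Fin n} (h : i ≠ j) : bef y i j ∨ bef y j i := by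
  rcases lt_trichotomy (y i) (y j) with h1 | h1 | h1
  · exact Or.inl (Or.inl h1)
  · rcases lt_or_gt_of_ne h with h2 | h2
    · exact Or.inr (Or.inr ⟨h1.symm, h2⟩)
    · exact Or.inl (Or.inr ⟨h1, h2⟩)
  · exact Or.inr (Or.inl h1)

lemma scnt_lt {y : Fin n → ℤ} {j i : Fin n} (h : bef y j i) : scnt y j < scnt y i := by
  apply Finset.card_lt_card
  constructor
  · intro l hl
    simp only [mem_filter, mem_univ, true_and] at hl ⊢
    exact bef_trans hl h
  · intro hsub
    have : j ∈ univ.filter fun l => bef y l i := by simp [h]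
    have := hsub this
    simp only [mem_filter, mem_univ, true_and] at this
    exact bef_irrefl y j this

lemma scnt_le_pred (y : Fin n → ℤ) (i : Fin n) : scnt y i + 1 ≤ n := by
  have : (univ.filter fun j => bef y j i) ⊆ univ.erase i := by
    intro l hl
    simp only [mem_filter, mem_univ, true_and] at hl
    apply Finset.mem_erase.2
    exact ⟨fun h => bef_irrefl y i (h ▸ hl), mem_univ l⟩
  have h2 := Finset.card_le_card this
  have h3 : (univ.erase i).card = n - 1 := by
    rw [Finset.card_erase_of_mem (mem_univ i)]
    simp
  have h4 : 1 ≤ n := Nat.pos_of_ne_zero (fun h => (h ▸ i).elim0)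
  unfold scnt
  omega

lemma card_band {x : Fin n → ℤ} (hinj : Function.Injective x) (a c : ℤ) :
    ((univ.filter fun l => a ≤ x l ∧ x l < c).card : ℤ) ≤ max (c - a) 0 := by
  have h1 : (univ.filter fun l => a ≤ x l ∧ x l < c).card ≤ (Finset.Ico a c).card := by
    apply Finset.card_le_card_of_injOn x
    · intro l hl
      simp only [mem_coe, mem_filter, mem_univ, true_and] at hl
      simpa [Finset.mem_Ico] using hl
    · exact fun u _ v _ h => hinj h
  have h2 : (Finset.Ico a c).card = (c - a).toNat := Int.card_Ico a c
  omega

lemma split (x : Fin n → ℤ) {a c : ℤ} (h : a ≤ c) :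
    (univ.filter fun l => x l < c).card
      = (univ.filter fun l => x l < a).card
        + (univ.filter fun l => a ≤ x l ∧ x l < c).card := by
  rw [← Finset.card_union_of_disjoint]
  · congr 1
    ext l
    simp only [mem_union, mem_filter, mem_univ, true_and]
    omega
  · rw [Finset.disjoint_left]
    intro l h1 h2
    simp only [mem_filter, mem_univ, true_and] at h1 h2
    omega

/-- Key chain lemma: in a valid `[0,b]` configuration, if `i < j` and `x i < x j`, then the
gap `x j - x i` exceeds `b` by at least the number of indices with value in `[x i, x j)`. -/
lemma key {b : ℤ} {x : Fin n → ℤ}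
    (hval : ∀ i j : Fin n, i < j → ∀ g : ℤ, 0 ≤ g → g ≤ b → x j ≠ x i + g)
    (hinj : Function.Injective x) :
    ∀ d : ℕ, ∀ i j : Fin n, i < j → x i < x j → (x j - x i).toNat ≤ d →
      ((univ.filter fun l => x i ≤ x l ∧ x l < x j).card : ℤ) + b ≤ x j - x i := by
  intro d
  induction d with
  | zero => intro i j hij hx hd; omega
  | succ d ih =>
    intro i j hij hx hd
    set S := univ.filter fun l => x i ≤ x l ∧ x l < x j with hS
    have hiS : i ∈ S := by simp [hS, le_refl, hx]
    obtain ⟨k, hkS, hkmax⟩ := Finset.exists_max_image S x ⟨i, hiS⟩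
    have hkS' := hkS
    simp only [hS, mem_filter, mem_univ, true_and] at hkS'
    have gap : ∀ i' j' : Fin n, i' < j' → x i' < x j' → b + 1 ≤ x j' - x i' := by
      intro i' j' h1 h2
      by_contra h
      exact hval i' j' h1 (x j' - x i') (by omega) (by omega) (by ring)
    by_cases hk : k = i
    · have hSsub : S = {i} := by
        apply Finset.eq_singleton_iff_unique_mem.2
        refine ⟨hiS, fun l hl => ?_⟩
        have hl' := hl
        simp only [hS, mem_filter, mem_univ, true_and] at hl'
        have := hkmax l hl
        rw [hk] at this
        exact hinj (le_antisymm this hl'.1)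
      have : S.card = 1 := by rw [hSsub]; simp
      have := gap i j hij hx
      omega
    · have hxik : x i < x k := lt_of_le_of_ne hkS'.1 (fun h => hk (hinj h.symm))
      have hxkj : x k < x j := hkS'.2
      have hsub : S ⊆ insert k (univ.filter fun l => x i ≤ x l ∧ x l < x k) := by
        intro l hl
        rcases eq_or_ne l k with rfl | hlk
        · exact Finset.mem_insert_self _ _
        · have hl' := hl
          simp only [hS, mem_filter, mem_univ, true_and] at hl'
          have hle := hkmax l hl
          have : x l < x k := lt_of_le_of_ne hle (fun h => hlk (hinj h))
          exact Finset.mem_insert_of_mem (by simp [hl'.1, this])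
      have hcard : S.card ≤ (univ.filter fun l => x i ≤ x l ∧ x l < x k).card + 1 := by
        calc S.card ≤ (insert k (univ.filter fun l => x i ≤ x l ∧ x l < x k)).card :=
              Finset.card_le_card hsub
          _ ≤ _ := Finset.card_insert_le _ _
      rcases lt_or_ge k j with hkj | hjk
      · have h1 := gap k j hkj hxkj
        have h2 := card_band hinj (x i) (x k)
        omega
      · have hjk' : j < k := lt_of_le_of_ne hjk (fun h => (ne_of_lt hxkj) (congrArg x h.symm))
        have hik : i < k := lt_trans hij hjk'
        have hrec := ih i k hik hxik (by omega)
        omega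

section Backward

variable {b m : ℤ} {y : Fin n → ℤ}
  (hbnd : ∀ v, 1 ≤ y v ∧ y v ≤ m - n + 1)
  (hval : ∀ i j : Fin n, i < j → ∀ g : ℤ, 1 ≤ g → g ≤ b - 1 → y j ≠ y i + g)

/-- The backward map: add to each coordinate its tie-broken rank. -/
def bwd (y : Fin n → ℤ) : Fin n → ℤ := fun i => y i + scnt y i

lemma bwd_lt_of_bef {j i : Fin n} (h : bef y j i) : bwd y j < bwd y i := by
  have h1 := scnt_lt h
  have h2 : y j ≤ y i := by rcases h with h | ⟨h, _⟩ <;> omega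
  unfold bwd
  omega

lemma bwd_lt_iff {j i : Fin n} : bwd y j < bwd y i ↔ bef y j i := by
  constructor
  · intro h
    by_contra hb
    rcases eq_or_ne i j with rfl | hne
    · exact lt_irrefl _ h
    · rcases bef_total (y := y) hne with h2 | h2
      · exact absurd (bwd_lt_of_bef h2) (by omega)
      · exact hb h2
  · exact bwd_lt_of_bef

include hbnd in
lemma bwd_bnd : ∀ v, 1 ≤ bwd y v ∧ bwd y v ≤ m := by
  intro v
  have h1 := (hbnd v).1
  have h2 := (hbnd v).2
  have h3 := scnt_le_pred y v
  unfold bwd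
  have : (scnt y v : ℤ) + 1 ≤ n := by exact_mod_cast Nat.cast_le.2 h3
  omega

include hval in
lemma bwd_val : ∀ i j : Fin n, i < j → ∀ g : ℤ, 0 ≤ g → g ≤ b → bwd y j ≠ bwd y i + g := by
  intro i j hij g hg0 hgb heq
  rcases eq_or_lt_of_le hg0 with rfl | hg1
  · have hne : i ≠ j := ne_of_lt hij
    rcases bef_total (y := y) hne with h | h
    · have := bwd_lt_of_bef h; omega
    · have := bwd_lt_of_bef h; omega
  · have hlt : bwd y i < bwd y j := by omega
    have hbef : bef y i j := bwd_lt_iff.1 hlt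
    have hyij : y i < y j := by
      rcases hbef with h | ⟨h, h'⟩
      · exact h
      · exact absurd hij (by omega)
    have hgap : b ≤ y j - y i := by
      by_contra h
      exact hval i j hij (y j - y i) (by omega) (by omega) (by ring)
    have hs := scnt_lt hbef
    unfold bwd at heq
    omega

lemma bwd_rnk : ∀ i, rnk (bwd y) i = scnt y i := by
  intro i
  unfold rnk scnt
  congr 1
  apply Finset.filter_congr
  intro j _
  exact bwd_lt_iff

end Backward

section Forward

variable {b m : ℤ} {x : Fin n → ℤ}
  (hbnd : ∀ v, 1 ≤ x v ∧ x v ≤ m)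
  (hval : ∀ i j : Fin n, i < j → ∀ g : ℤ, 0 ≤ g → g ≤ b → x j ≠ x i + g)
  (hb : 1 ≤ b)

/-- The forward map: subtract from each coordinate its rank. -/
def fwd (x : Fin n → ℤ) : Fin n → ℤ := fun i => x i - rnk x i

include hval hb in
lemma hinj : Function.Injective x := by
  intro u v huv
  by_contra hne
  rcases lt_or_gt_of_ne hne with h | h
  · exact hval u v h 0 le_rfl (by omega) (by omega)
  · exact hval v u h 0 le_rfl (by omega) (by omega)

include hbnd hval hb in
lemma fwd_low : ∀ v, 1 ≤ fwd x v := by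
  intro v
  have hi := hinj hval hb
  have heq : (univ.filter fun j => x j < x v)
      = univ.filter fun j => 1 ≤ x j ∧ x j < x v := by
    apply Finset.filter_congr
    intro j _
    have := (hbnd j).1
    omega
  have hc := card_band hi 1 (x v)
  have h1 := (hbnd v).1
  unfold fwd rnk
  rw [heq]
  omega

include hbnd hval hb in
lemma fwd_high : ∀ v, fwd x v ≤ m - n + 1 := by
  intro v
  have hi := hinj hval hb
  have hsplit : (univ.filter fun j => x j < x v).card
      + (univ.filter fun j => ¬ x j < x v).card = n := by
    rw [Finset.card_filter_add_card_filter_not]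
    simp
  have heq : (univ.filter fun j => ¬ x j < x v)
      = univ.filter fun j => x v ≤ x j ∧ x j < m + 1 := by
    apply Finset.filter_congr
    intro j _
    have := (hbnd j).2
    omega
  have hc := card_band hi (x v) (m + 1)
  rw [heq] at hsplit
  have h2 := (hbnd v).2
  unfold fwd rnk
  omega

include hval hb in
lemma fwd_le_of_lt {j i : Fin n} (h : x j < x i) : fwd x j ≤ fwd x i := by
  have hi := hinj hval hb
  have hs := split x (le_of_lt h) (a := x j) (c := x i)
  have hc := card_band hi (x j) (x i)
  unfold fwd rnk
  omega

include hval hb in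
lemma fwd_gap {i j : Fin n} (hij : i < j) (h : x i < x j) : b ≤ fwd x j - fwd x i := by
  have hi := hinj hval hb
  have hs := split x (le_of_lt h) (a := x i) (c := x j)
  have hk := key hval hi (x j - x i).toNat i j hij h le_rfl
  unfold fwd rnk
  omega

include hval hb in
lemma fwd_bef_iff {j i : Fin n} : bef (fwd x) j i ↔ x j < x i := by
  have hi := hinj hval hb
  constructor
  · intro h
    rcases lt_trichotomy (x j) (x i) with h1 | h1 | h1
    · exact h1
    · exact absurd (hi h1) (fun he => by
        rw [he] at h
        rcases h with h | ⟨_, h⟩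
        · exact lt_irrefl _ h
        · exact lt_irrefl _ h)
    · exfalso
      rcases lt_trichotomy i j with h2 | h2 | h2
      · have := fwd_gap hval hb h2 h1
        rcases h with h | ⟨h, _⟩ <;> omega
      · rw [h2] at h1; exact lt_irrefl _ h1
      · have := fwd_le_of_lt hval hb h1
        rcases h with h | ⟨h, h'⟩
        · omega
        · exact absurd h' (by omega)
  · intro h
    have hle := fwd_le_of_lt hval hb h
    rcases eq_or_lt_of_le hle with he | hlt
    · refine Or.inr ⟨he, ?_⟩
      rcases lt_trichotomy i j with h2 | h2 | h2
      · exact h2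
      · exact absurd (congrArg x h2) (ne_of_gt h)
      · have := fwd_gap hval hb h2 h
        omega
    · exact Or.inl hlt

include hval hb in
lemma fwd_val : ∀ i j : Fin n, i < j → ∀ g : ℤ, 1 ≤ g → g ≤ b - 1 →
    fwd x j ≠ fwd x i + g := by
  intro i j hij g hg1 hgb heq
  have hi := hinj hval hb
  rcases lt_trichotomy (x j) (x i) with h1 | h1 | h1
  · have := fwd_le_of_lt hval hb h1
    omega
  · exact absurd (hi h1) (ne_of_lt hij).symm
  · have := fwd_gap hval hb hij h1
    omega

include hval hb in
lemma fwd_scnt : ∀ i, scnt (fwd x) i = rnk x i := by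
  intro i
  unfold scnt rnk
  congr 1
  apply Finset.filter_congr
  intro j _
  exact fwd_bef_iff hval hb

end Forward

end ShiftFormulaAux

open ShiftFormulaAux in
/-- **Shift formula** (Equation 7).  For `n ≥ 1`, `b ≥ 1`, and every integer `m ≥ n − 1`:
`N_{[0,b]}(n, m) = N_{[1, b−1]}(n, m − n + 1)`.  (When `b = 1` the gain interval `[1, 0]` is
empty, so the right-hand side counts all maps `x : {1, …, n} → {1, …, m − n + 1}`.) -/
theorem shift_formula (n : ℕ) (hn : 1 ≤ n) (b : ℤ) (hb : 1 ≤ b) (m : ℤ)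
    (hm : (n : ℤ) - 1 ≤ m) :
    latticeCount 0 b n m = latticeCount 1 (b - 1) n (m - n + 1) := by
  apply Nat.card_congr
  refine
    { toFun := fun p => ⟨fwd p.1,
        fun v => ⟨fwd_low p.2.1
            (fun i j hij g hg0 hgb => p.2.2 i j hij g hg0 hgb) hb v,
          fwd_high p.2.1 (fun i j hij g hg0 hgb => p.2.2 i j hij g hg0 hgb) hb v⟩,
        fwd_val (fun i j hij g hg0 hgb => p.2.2 i j hij g hg0 hgb) hb⟩
      invFun := fun q => ⟨bwd q.1,
        bwd_bnd q.2.1,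
        bwd_val (fun i j hij g hg1 hgb => q.2.2 i j hij g hg1 hgb)⟩
      left_inv := fun p => Subtype.ext (funext fun i => ?_)
      right_inv := fun q => Subtype.ext (funext fun i => ?_) }
  · have h := fwd_scnt (fun i j hij g hg0 hgb => p.2.2 i j hij g hg0 hgb) hb i
    show bwd (fwd p.1) i = p.1 i
    simp only [bwd]
    rw [h]
    simp only [fwd]
    ring
  · have h := bwd_rnk (y := q.1) i
    show fwd (bwd q.1) i = q.1 i
    simp only [fwd]
    rw [h]
    simp only [bwd]
    ring
end

section
/- Linial arrangement count. For all integers n ≥ 2 and m ≥ 0, the number of integer points of [1,m]^n lying on none of the hyperplanes x_j = x_i + 1 (1 ≤ i < j ≤ n) of the Linial arrangement satisfies N_{[1,1]}(n,m) = ∑_{r=0}^{n−1} A(n, r+1) · C(m + n − 1 − 2r, n). -/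
open Finset

namespace LinialAux

/-- Transitive chain along an interval of `Fin n`. -/
lemma chain_interval {n : ℕ} {β : Type*} {r : β → β → Prop}
    (htrans : ∀ a b c, r a b → r b c → r a c) {f : Fin n → β} :
    ∀ (b : ℕ) (hb : b < n) (a : ℕ) (ha : a < n), a < b →
      (∀ (i : ℕ) (hi : i + 1 < n), a ≤ i → i + 1 ≤ b →
        r (f ⟨i, Nat.lt_of_succ_lt hi⟩) (f ⟨i + 1, hi⟩)) →
      r (f ⟨a, ha⟩) (f ⟨b, hb⟩) := by
  intro b
  induction b with
  | zero => omega
  | succ b ih =>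
    intro hb a ha hab h
    rcases Nat.lt_succ_iff_lt_or_eq.mp hab with h' | rfl
    · exact htrans _ _ _ (ih (by omega) a ha h' (fun i hi h1 h2 => h i hi h1 (by omega)))
        (h b hb (by omega) le_rfl)
    · exact h a hb le_rfl le_rfl

open Classical in
/-- Number of ascents of `σ` at positions `< k`. -/
noncomputable def ascCount {n : ℕ} (σ : Equiv.Perm (Fin n)) (k : ℕ) : ℕ :=
  ((Finset.range k).filter
    (fun i => ∃ h1 : i + 1 < n, σ ⟨i, Nat.lt_of_succ_lt h1⟩ < σ ⟨i + 1, h1⟩)).card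

lemma ascCount_zero {n : ℕ} (σ : Equiv.Perm (Fin n)) : ascCount σ 0 = 0 := by
  simp [ascCount]

open Classical in
lemma ascCount_succ {n : ℕ} (σ : Equiv.Perm (Fin n)) (k : ℕ) :
    ascCount σ (k + 1) = ascCount σ k +
      (if (∃ h1 : k + 1 < n, σ ⟨k, Nat.lt_of_succ_lt h1⟩ < σ ⟨k + 1, h1⟩) then 1 else 0) := by
  unfold ascCount
  rw [Finset.range_add_one, Finset.filter_insert]
  split_ifs with h
  · rw [Finset.card_insert_of_notMem (by simp)]
  · simp

lemma ascCount_last {n : ℕ} (hn : 1 ≤ n) (σ : Equiv.Perm (Fin n)) :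
    ascCount σ n = ascCount σ (n - 1) := by
  obtain ⟨n', rfl⟩ : ∃ n', n = n' + 1 := ⟨n - 1, by omega⟩
  rw [ascCount_succ]
  simp only [Nat.add_sub_cancel]
  rw [if_neg (by rintro ⟨h1, -⟩; omega)]
  omega

lemma ascCount_le {n : ℕ} (hn : 1 ≤ n) (σ : Equiv.Perm (Fin n)) :
    ascCount σ n ≤ n - 1 := by
  rw [ascCount_last hn]
  calc ascCount σ (n-1) ≤ (Finset.range (n-1)).card := Finset.card_filter_le _ _
  _ = n - 1 := Finset.card_range _

open Classical in
lemma ascCount_eq_natCard {n : ℕ} (σ : Equiv.Perm (Fin n)) :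
    Nat.card {i : ℕ // ∃ h1 : i + 1 < n,
      σ ⟨i, Nat.lt_of_succ_lt h1⟩ < σ ⟨i + 1, h1⟩} = ascCount σ n := by
  have hset : {i : ℕ | ∃ h1 : i + 1 < n, σ ⟨i, Nat.lt_of_succ_lt h1⟩ < σ ⟨i + 1, h1⟩} =
      ↑((Finset.range n).filter
        (fun i => ∃ h1 : i + 1 < n, σ ⟨i, Nat.lt_of_succ_lt h1⟩ < σ ⟨i + 1, h1⟩)) := by
    ext i
    simp only [Set.mem_setOf_eq, Finset.coe_filter, Finset.mem_range]
    exact ⟨fun h => ⟨by obtain ⟨h1, -⟩ := h; omega, h⟩, fun h => h.2⟩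
  have : Nat.card {i : ℕ // ∃ h1 : i + 1 < n,
      σ ⟨i, Nat.lt_of_succ_lt h1⟩ < σ ⟨i + 1, h1⟩} =
      Nat.card ({i : ℕ | ∃ h1 : i + 1 < n,
        σ ⟨i, Nat.lt_of_succ_lt h1⟩ < σ ⟨i + 1, h1⟩} : Set ℕ) := rfl
  rw [this, hset, Nat.card_coe_set_eq, Set.ncard_coe_finset]
  rfl

/-- The fiber predicate: `y` is monotone, bounded, with gaps `≥ 2` at ascents of `σ`. -/
def FibP (n : ℕ) (m : ℤ) (σ : Equiv.Perm (Fin n)) (y : Fin n → ℤ) : Prop :=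
  (∀ v, 1 ≤ y v ∧ y v ≤ m) ∧ Monotone y ∧
    ∀ (i : ℕ) (h1 : i + 1 < n), σ ⟨i, Nat.lt_of_succ_lt h1⟩ < σ ⟨i + 1, h1⟩ →
      y ⟨i, Nat.lt_of_succ_lt h1⟩ + 2 ≤ y ⟨i + 1, h1⟩

lemma fib_finite (n : ℕ) (m : ℤ) (σ : Equiv.Perm (Fin n)) :
    Finite {y : Fin n → ℤ // FibP n m σ y} := by
  apply Finite.of_injective
    (fun y => (fun v => (⟨y.1 v, Finset.mem_Icc.2 (y.2.1 v)⟩ : (Finset.Icc (1:ℤ) m))))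
  intro y y' h
  ext v
  exact congrArg Subtype.val (congrFun h v)

noncomputable def zMap {n : ℕ} (σ : Equiv.Perm (Fin n)) (y : Fin n → ℤ) : Fin n → ℤ :=
  fun v => y v + v.val - 2 * ascCount σ v.val

noncomputable def yMap {n : ℕ} (σ : Equiv.Perm (Fin n)) (z : Fin n → ℤ) : Fin n → ℤ :=
  fun v => z v + 2 * ascCount σ v.val - v.val

lemma zMap_prop {n : ℕ} (hn : 1 ≤ n) {m : ℤ} (σ : Equiv.Perm (Fin n)) {y : Fin n → ℤ}
    (hy : FibP n m σ y) : StrictMono (zMap σ y) ∧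
      ∀ v, zMap σ y v ∈ Finset.Icc (1:ℤ) (m + n - 1 - 2 * ascCount σ n) := by
  obtain ⟨hb, hmono, hasc⟩ := hy
  have npos : 0 < n := hn
  have hsm : StrictMono (zMap σ y) := by
    intro a b hab
    refine chain_interval (r := (· < ·)) (fun a b c => lt_trans) b.val b.isLt a.val a.isLt hab ?_
    intro i hi _ _
    have hstep := ascCount_succ σ i
    by_cases hp : ∃ h1 : i + 1 < n, σ ⟨i, Nat.lt_of_succ_lt h1⟩ < σ ⟨i + 1, h1⟩
    · obtain ⟨h1, hlt⟩ := hp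
      have := hasc i h1 hlt
      rw [if_pos ⟨h1, hlt⟩] at hstep
      simp only [zMap]
      push_cast [hstep]
      linarith
    · have hle : y ⟨i, Nat.lt_of_succ_lt hi⟩ ≤ y ⟨i + 1, hi⟩ := hmono (by simp [Fin.le_def])
      rw [if_neg hp] at hstep
      simp only [zMap]
      push_cast [hstep]
      linarith
  refine ⟨hsm, fun v => Finset.mem_Icc.2 ⟨?_, ?_⟩⟩
  · have h0 : zMap σ y ⟨0, npos⟩ ≤ zMap σ y v := hsm.monotone (by simp [Fin.le_def])
    have he : zMap σ y ⟨0, npos⟩ = y ⟨0, npos⟩ := by simp [zMap, ascCount_zero]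
    have := (hb ⟨0, npos⟩).1
    omega
  · have hlast : zMap σ y v ≤ zMap σ y ⟨n - 1, by omega⟩ :=
      hsm.monotone (by simp [Fin.le_def]; omega)
    have hzl : zMap σ y ⟨n - 1, by omega⟩
        = y ⟨n - 1, by omega⟩ + ((n:ℤ) - 1) - 2 * ascCount σ n := by
      simp only [zMap, ascCount_last hn σ]
      push_cast [Nat.cast_sub hn]
      ring
    have := (hb ⟨n - 1, by omega⟩).2
    omega

lemma yMap_prop {n : ℕ} (hn : 1 ≤ n) {m : ℤ} (σ : Equiv.Perm (Fin n)) {z : Fin n → ℤ}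
    (hz : StrictMono z ∧ ∀ v, z v ∈ Finset.Icc (1:ℤ) (m + n - 1 - 2 * ascCount σ n)) :
    FibP n m σ (yMap σ z) := by
  obtain ⟨hsm, hbd⟩ := hz
  have npos : 0 < n := hn
  have hadj : ∀ (i : ℕ) (hi : i + 1 < n),
      yMap σ z ⟨i, Nat.lt_of_succ_lt hi⟩ ≤ yMap σ z ⟨i + 1, hi⟩ ∧
      (σ ⟨i, Nat.lt_of_succ_lt hi⟩ < σ ⟨i + 1, hi⟩ →
        yMap σ z ⟨i, Nat.lt_of_succ_lt hi⟩ + 2 ≤ yMap σ z ⟨i + 1, hi⟩) := by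
    intro i hi
    have hz1 : z ⟨i, Nat.lt_of_succ_lt hi⟩ + 1 ≤ z ⟨i + 1, hi⟩ :=
      Int.add_one_le_iff.mpr (hsm (by simp [Fin.lt_def]))
    have hstep := ascCount_succ σ i
    by_cases hp : ∃ h1 : i + 1 < n, σ ⟨i, Nat.lt_of_succ_lt h1⟩ < σ ⟨i + 1, h1⟩
    · rw [if_pos hp] at hstep
      constructor
      · simp only [yMap]; push_cast [hstep]; linarith
      · intro _; simp only [yMap]; push_cast [hstep]; linarith
    · rw [if_neg hp] at hstep
      refine ⟨by simp only [yMap]; push_cast [hstep]; linarith, fun hlt => absurd ⟨hi, hlt⟩ hp⟩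
  have hmono : Monotone (yMap σ z) := by
    intro a b hab
    rcases eq_or_lt_of_le hab with rfl | hab'
    · exact le_rfl
    · exact chain_interval (r := (· ≤ ·)) (fun a b c => le_trans) b.val b.isLt a.val a.isLt
        hab' (fun i hi _ _ => (hadj i hi).1)
  refine ⟨fun v => ⟨?_, ?_⟩, hmono, fun i h1 hlt => (hadj i h1).2 hlt⟩
  · have h0 : yMap σ z ⟨0, npos⟩ ≤ yMap σ z v := hmono (by simp [Fin.le_def])
    have he : yMap σ z ⟨0, npos⟩ = z ⟨0, npos⟩ := by simp [yMap, ascCount_zero]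
    have := (Finset.mem_Icc.1 (hbd ⟨0, npos⟩)).1
    omega
  · have hlast : yMap σ z v ≤ yMap σ z ⟨n - 1, by omega⟩ := hmono (by simp [Fin.le_def]; omega)
    have hyl : yMap σ z ⟨n - 1, by omega⟩
        = z ⟨n - 1, by omega⟩ + 2 * ascCount σ n - ((n:ℤ) - 1) := by
      simp only [yMap, ascCount_last hn σ]
      push_cast [Nat.cast_sub hn]
      ring
    have := (Finset.mem_Icc.1 (hbd ⟨n - 1, by omega⟩)).2
    omega

set_option maxHeartbeats 1000000 in
lemma fib_card (n : ℕ) (hn : 1 ≤ n) (m : ℤ) (σ : Equiv.Perm (Fin n)) :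
    Nat.card {y : Fin n → ℤ // FibP n m σ y} =
      intChoose (m + n - 1 - 2 * ascCount σ n) n := by
  classical
  set M : ℤ := m + n - 1 - 2 * ascCount σ n with hM
  let e1 : {y : Fin n → ℤ // FibP n m σ y} ≃
      {z : Fin n → ℤ // StrictMono z ∧ ∀ v, z v ∈ Finset.Icc (1:ℤ) M} :=
  { toFun := fun y => ⟨zMap σ y.1, zMap_prop hn σ y.2⟩,
    invFun := fun z => ⟨yMap σ z.1, yMap_prop hn σ z.2⟩,
    left_inv := fun y => by
      apply Subtype.ext; funext v; simp [yMap, zMap],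
    right_inv := fun z => by
      apply Subtype.ext; funext v; simp [yMap, zMap] }
  rw [Nat.card_congr e1]
  let e2 : {z : Fin n → ℤ // StrictMono z ∧ ∀ v, z v ∈ Finset.Icc (1:ℤ) M} ≃
      ↥(Finset.powersetCard n (Finset.Icc (1:ℤ) M)) :=
  { toFun := fun z => ⟨Finset.image z.1 Finset.univ, Finset.mem_powersetCard.2
      ⟨by intro a ha; obtain ⟨v, -, rfl⟩ := Finset.mem_image.1 ha; exact z.2.2 v,
       by rw [Finset.card_image_of_injective _ z.2.1.injective, Finset.card_univ,
         Fintype.card_fin]⟩⟩,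
    invFun := fun s => ⟨fun i => Finset.orderEmbOfFin s.1
        (Finset.mem_powersetCard.1 s.2).2 i,
      (Finset.orderEmbOfFin s.1 _).strictMono,
      fun v => (Finset.mem_powersetCard.1 s.2).1 (Finset.orderEmbOfFin_mem _ _ _)⟩,
    left_inv := fun z => by
      apply Subtype.ext
      exact (Finset.orderEmbOfFin_unique _
        (fun x => Finset.mem_image.2 ⟨x, Finset.mem_univ x, rfl⟩) z.2.1).symm,
    right_inv := fun s => by
      apply Subtype.ext
      rw [← Finset.coe_inj, Finset.coe_image, Finset.coe_univ, Set.image_univ]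
      exact Finset.range_orderEmbOfFin _ _ }
  rw [Nat.card_congr e2, Nat.card_eq_fintype_card, Fintype.card_coe,
    Finset.card_powersetCard, Int.card_Icc]
  congr 2
  omega

/-- The map from fibers to lattice points lands in the good set. -/
lemma toX_mem {n : ℕ} {m : ℤ} {σ : Equiv.Perm (Fin n)} {y : Fin n → ℤ}
    (hy : FibP n m σ y) :
    (∀ v, 1 ≤ (y ∘ σ.symm) v ∧ (y ∘ σ.symm) v ≤ m) ∧
    ∀ i j : Fin n, i < j → ∀ g : ℤ, 1 ≤ g → g ≤ 1 → (y ∘ σ.symm) j ≠ (y ∘ σ.symm) i + g := by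
  obtain ⟨hb, hmono, hasc⟩ := hy
  refine ⟨fun v => hb _, ?_⟩
  intro i j hij g hg1 hg2 hx
  obtain rfl : g = 1 := le_antisymm hg2 hg1
  simp only [Function.comp_apply] at hx
  set k := σ.symm i with hk
  set l := σ.symm j with hl
  have hkl : k < l := by
    rcases lt_trichotomy k l with h | h | h
    · exact h
    · exfalso
      have : i = j := by
        have := congrArg σ h
        simpa [hk, hl] using this
      exact absurd this hij.ne
    · exfalso
      have : y l ≤ y k := hmono h.le
      omega
  have hdes : σ l < σ k := by
    refine chain_interval (r := fun u v : Fin n => v < u)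
      (fun a b c hab hbc => lt_trans hbc hab) l.val l.isLt k.val k.isLt hkl ?_
    intro p hp hkp hpl
    have h1 : y k ≤ y ⟨p, Nat.lt_of_succ_lt hp⟩ := hmono (by simp [Fin.le_def]; omega)
    have h2 : y ⟨p + 1, hp⟩ ≤ y l := hmono (by simp [Fin.le_def]; omega)
    rcases lt_trichotomy (σ ⟨p, Nat.lt_of_succ_lt hp⟩) (σ ⟨p + 1, hp⟩) with hc | hc | hc
    · exfalso
      have := hasc p hp hc
      omega
    · exfalso
      have : (⟨p, Nat.lt_of_succ_lt hp⟩ : Fin n) = ⟨p + 1, hp⟩ := σ.injective hc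
      simp [Fin.mk.injEq] at this
    · exact hc
  have : j < i := by simpa [hk, hl] using hdes
  exact absurd hij (lt_asymm this)

/-- The lex comparison key composed with `σ` is strictly monotone on fibers. -/
lemma strictMono_key {n : ℕ} {m : ℤ} {σ : Equiv.Perm (Fin n)} {y : Fin n → ℤ}
    (hy : FibP n m σ y) :
    StrictMono (fun k : Fin n => toLex (y k, -(((σ k : Fin n) : ℕ) : ℤ))) := by
  obtain ⟨hb, hmono, hasc⟩ := hy
  intro a b hab
  refine chain_interval (r := ((· < ·) : ℤ ×ₗ ℤ → ℤ ×ₗ ℤ → Prop))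
    (f := fun k : Fin n => toLex (y k, -(((σ k : Fin n) : ℕ) : ℤ))) (fun a b c => lt_trans)
    b.val b.isLt a.val a.isLt hab ?_
  intro i hi _ _
  rw [Prod.Lex.lt_iff]
  have hle : y ⟨i, Nat.lt_of_succ_lt hi⟩ ≤ y ⟨i + 1, hi⟩ := hmono (by simp [Fin.le_def])
  rcases eq_or_lt_of_le hle with heq | hlt
  · refine Or.inr ⟨heq, ?_⟩
    have hne : σ ⟨i, Nat.lt_of_succ_lt hi⟩ ≠ σ ⟨i + 1, hi⟩ := by
      intro hc
      have := σ.injective hc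
      simp [Fin.mk.injEq] at this
    rcases lt_or_gt_of_ne hne with hc | hc
    · exfalso
      have := hasc i hi hc
      omega
    · have : ((σ ⟨i + 1, hi⟩ : Fin n) : ℕ) < ((σ ⟨i, Nat.lt_of_succ_lt hi⟩ : Fin n) : ℕ) := hc
      change -(((σ ⟨i, Nat.lt_of_succ_lt hi⟩ : Fin n) : ℕ) : ℤ) < -(((σ ⟨i + 1, hi⟩ : Fin n) : ℕ) : ℤ)
      omega
  · exact Or.inl hlt

lemma card_eq_sum (n : ℕ) (m : ℤ) :
    latticeCount 1 1 n m =
      ∑ σ : Equiv.Perm (Fin n), Nat.card {y : Fin n → ℤ // FibP n m σ y} := by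
  classical
  haveI : ∀ σ : Equiv.Perm (Fin n), Finite {y : Fin n → ℤ // FibP n m σ y} :=
    fun σ => fib_finite n m σ
  haveI : ∀ σ : Equiv.Perm (Fin n), Fintype {y : Fin n → ℤ // FibP n m σ y} :=
    fun σ => Fintype.ofFinite _
  set Q : (Fin n → ℤ) → Prop := fun x => (∀ v, 1 ≤ x v ∧ x v ≤ m) ∧
    ∀ i j : Fin n, i < j → ∀ g : ℤ, (1:ℤ) ≤ g → g ≤ 1 → x j ≠ x i + g with hQ
  let Φ : (Σ σ : Equiv.Perm (Fin n), {y : Fin n → ℤ // FibP n m σ y}) → {x : Fin n → ℤ // Q x} :=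
    fun p => ⟨p.2.1 ∘ p.1.symm, toX_mem p.2.2⟩
  have hbij : Function.Bijective Φ := by
    constructor
    · rintro ⟨σ, y, hy⟩ ⟨τ, w, hw⟩ h
      have hx : y ∘ σ.symm = w ∘ τ.symm := congrArg Subtype.val h
      set x : Fin n → ℤ := y ∘ σ.symm with hxd
      set K : Fin n → ℤ ×ₗ ℤ := fun i => toLex (x i, -((i : ℕ) : ℤ)) with hK
      have hyx : ∀ k, x (σ k) = y k := fun k => by simp [hxd]
      have hwx : ∀ k, x (τ k) = w k := fun k => by
        have := congrFun hx (τ k)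
        simpa [hxd] using this
      have hs1 : StrictMono (K ∘ ⇑σ) := by
        have : (K ∘ ⇑σ) = fun k : Fin n => toLex (y k, -(((σ k : Fin n) : ℕ) : ℤ)) := by
          funext k; simp [hK, hyx]
        rw [this]; exact strictMono_key hy
      have hs2 : StrictMono (K ∘ ⇑τ) := by
        have : (K ∘ ⇑τ) = fun k : Fin n => toLex (w k, -(((τ k : Fin n) : ℕ) : ℤ)) := by
          funext k; simp [hK, hwx]
        rw [this]; exact strictMono_key hw
      haveI : WellFoundedLT (Fin n) := Finite.to_wellFoundedLT
      have hrange : Set.range (K ∘ ⇑σ) = Set.range (K ∘ ⇑τ) := by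
        rw [Function.Surjective.range_comp σ.surjective, Function.Surjective.range_comp τ.surjective]
      have hKeq : K ∘ ⇑σ = K ∘ ⇑τ := (hs1.range_inj hs2).mp hrange
      have hKinj : Function.Injective K := by
        intro a b hab
        have := congrArg (fun t => (ofLex t).2) hab
        simp only [hK] at this
        have : ((a : ℕ) : ℤ) = ((b : ℕ) : ℤ) := by
          simpa using this
        exact Fin.ext (by omega)
      have hστ : σ = τ := Equiv.ext fun k => hKinj (congrFun hKeq k)
      subst hστ
      have hyw : y = w := by
        funext k
        rw [← hyx k, ← hwx k]
      subst hyw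
      rfl
    · rintro ⟨x, hx⟩
      set K : Fin n → ℤ ×ₗ ℤ := fun i => toLex (x i, -((i : ℕ) : ℤ)) with hK
      set σ : Equiv.Perm (Fin n) := Tuple.sort K with hσ
      have hKinj : Function.Injective K := by
        intro a b hab
        have := congrArg (fun t => (ofLex t).2) hab
        simp only [hK] at this
        have : ((a : ℕ) : ℤ) = ((b : ℕ) : ℤ) := by simpa using this
        exact Fin.ext (by omega)
      have hmono : Monotone (K ∘ ⇑σ) := Tuple.monotone_sort K
      have hs : StrictMono (K ∘ ⇑σ) := hmono.strictMono_of_injective (hKinj.comp σ.injective)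
      refine ⟨⟨σ, ⟨x ∘ ⇑σ, ?_, ?_, ?_⟩⟩, ?_⟩
      · exact fun v => hx.1 _
      · intro a b hab
        have h := hmono hab
        have h' : x (σ a) < x (σ b) ∨ x (σ a) = x (σ b) ∧
            -(((σ a : Fin n) : ℕ) : ℤ) ≤ -(((σ b : Fin n) : ℕ) : ℤ) := Prod.Lex.le_iff.mp h
        rcases h' with h' | ⟨h', -⟩
        · exact le_of_lt h'
        · exact le_of_eq h'
      · intro i h1 hlt
        have hfin : (⟨i, Nat.lt_of_succ_lt h1⟩ : Fin n) < ⟨i + 1, h1⟩ := by simp [Fin.lt_def]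
        have h := hs hfin
        have h' : x (σ ⟨i, Nat.lt_of_succ_lt h1⟩) < x (σ ⟨i + 1, h1⟩) ∨
            x (σ ⟨i, Nat.lt_of_succ_lt h1⟩) = x (σ ⟨i + 1, h1⟩) ∧
            -(((σ ⟨i, Nat.lt_of_succ_lt h1⟩ : Fin n) : ℕ) : ℤ) <
              -(((σ ⟨i + 1, h1⟩ : Fin n) : ℕ) : ℤ) := Prod.Lex.lt_iff.mp h
        rcases h' with h' | ⟨-, h''⟩
        · have hne := hx.2 (σ ⟨i, Nat.lt_of_succ_lt h1⟩) (σ ⟨i + 1, h1⟩) hlt 1 le_rfl le_rfl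
          simp only [Function.comp_apply]
          omega
        · exfalso
          have : ((σ ⟨i, Nat.lt_of_succ_lt h1⟩ : Fin n) : ℕ) < ((σ ⟨i + 1, h1⟩ : Fin n) : ℕ) := hlt
          omega
      · apply Subtype.ext
        funext i
        simp [Φ]
  rw [show latticeCount 1 1 n m = Nat.card {x : Fin n → ℤ // Q x} from rfl,
    ← Nat.card_congr (Equiv.ofBijective Φ hbij)]
  rw [Nat.card_eq_fintype_card, Fintype.card_sigma]
  exact Finset.sum_congr rfl fun σ _ => (Nat.card_eq_fintype_card).symm

lemma eulerian_eq_filter (n r : ℕ) :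
    eulerianNumber n r = (Finset.univ.filter
      (fun σ : Equiv.Perm (Fin n) => ascCount σ n = r)).card := by
  classical
  unfold eulerianNumber
  rw [Nat.card_congr (Equiv.subtypeEquivRight
    (fun σ : Equiv.Perm (Fin n) => by rw [ascCount_eq_natCard]))]
  rw [Nat.card_eq_fintype_card, Fintype.card_subtype]

end LinialAux


/-- **Linial arrangement count.**  For `n ≥ 2` and `m ≥ 0`, the number of integer points of
`[1, m]^n` lying on none of the hyperplanes `x j = x i + 1` (`1 ≤ i < j ≤ n`) of the Linial
arrangement is `∑_{r=0}^{n−1} A(n, r+1) C(m + n − 1 − 2r, n)`. -/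
theorem linial_count (n : ℕ) (hn : 2 ≤ n) (m : ℤ) (hm : 0 ≤ m) :
    latticeCount 1 1 n m =
      ∑ r ∈ Finset.range n, eulerianNumber n r * intChoose (m + n - 1 - 2 * r) n := by
  classical
  have hn1 : 1 ≤ n := by omega
  rw [LinialAux.card_eq_sum n m]
  rw [Finset.sum_congr rfl (fun σ _ => LinialAux.fib_card n hn1 m σ)]
  rw [← Finset.sum_fiberwise_of_maps_to (g := fun σ : Equiv.Perm (Fin n) => LinialAux.ascCount σ n)
    (t := Finset.range n)
    (fun σ _ => Finset.mem_range.2 (by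
      show LinialAux.ascCount σ n < n
      have := LinialAux.ascCount_le hn1 σ; omega)) _]
  refine Finset.sum_congr rfl fun r hr => ?_
  rw [Finset.sum_congr rfl (fun σ hσ => by
    rw [(Finset.mem_filter.1 hσ).2]), Finset.sum_const, smul_eq_mul,
    LinialAux.eulerian_eq_filter n r]
end

section
/- Eventual polynomiality of the lattice-point count. Let n ≥ 1 and let E be an integral gain graph on vertex set {1,…,n}, and for an integer m ≥ 0 let f(m) be the number of proper maps x : {1,…,n} → {1,2,…,m} (equivalently, the number of integer points of [1,m]^n lying on none of the hyperplanes x_j = x_i + g for (i,j,g) ∈ E). Then there exist a monic polynomial p ∈ ℤ[X] of degree n and an integer M₀ ≥ 0 such that f(m) = p(m) for every integer m ≥ M₀. -/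
open Finset
open scoped Classical

/-- An edge of an integral gain graph on `Fin n`: the triple `(i, j, g)` represents an edge
from `i` to `j` with gain `g`. -/
abbrev GainEdge (n : ℕ) := Fin n × Fin n × ℤ

/-- `θ` is a potential for the edge set `S`: `θ j - θ i = g` for every edge `(i, j, g) ∈ S`. -/
def IsPotential {n : ℕ} (S : Finset (GainEdge n)) (θ : Fin n → ℤ) : Prop :=
  ∀ e ∈ S, θ e.2.1 - θ e.1 = e.2.2

/-- An edge set is balanced if it admits a potential. -/
def IsBalanced {n : ℕ} (S : Finset (GainEdge n)) : Prop :=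
  ∃ θ : Fin n → ℤ, IsPotential S θ

/-- Two vertices lie in the same connected component of (the underlying graph of) `S`. -/
def SameComp {n : ℕ} (S : Finset (GainEdge n)) (u v : Fin n) : Prop :=
  Relation.EqvGen (fun a b => ∃ g : ℤ, (a, b, g) ∈ S) u v

/-- The partition `π(S)` of the vertex set into the connected components of `S`,
represented as the finite set of its blocks. -/
noncomputable def blocks {n : ℕ} (S : Finset (GainEdge n)) : Finset (Finset (Fin n)) :=
  Finset.univ.image fun v => Finset.univ.filter fun u => SameComp S u v

/-- A balanced edge set `B ⊆ E` is closed (in `E`) if adjoining to `B` any edge of `E ∖ B` whose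
endpoints lie in the same block of `π(B)` destroys balance. -/
def GGClosed {n : ℕ} (E B : Finset (GainEdge n)) : Prop :=
  ∀ e ∈ E \ B, SameComp B e.1 e.2.1 → ¬ IsBalanced (insert e B)

/-- The poset `Lat^b(E)` of closed balanced subsets of `E` (as a finite set, ordered by
inclusion). -/
noncomputable def Latb {n : ℕ} (E : Finset (GainEdge n)) : Finset (Finset (GainEdge n)) :=
  E.powerset.filter fun B => IsBalanced B ∧ GGClosed E B

/-- A coloration `x` is proper for `E` if `x j ≠ x i + g` for every edge `(i, j, g) ∈ E`. -/
def ProperFor {n : ℕ} (E : Finset (GainEdge n)) (x : Fin n → ℤ) : Prop :=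
  ∀ e ∈ E, x e.2.1 ≠ x e.1 + e.2.2

/-- The number of proper colorations of `E` with colors in `{1, …, m}`. -/
noncomputable def properCount {n : ℕ} (E : Finset (GainEdge n)) (m : ℤ) : ℕ :=
  Nat.card {x : Fin n → ℤ // (∀ v, 1 ≤ x v ∧ x v ≤ m) ∧ ProperFor E x}

private lemma key (n : ℕ) (S : Finset (GainEdge n)) :
    ∃ (q : Polynomial ℤ) (M : ℤ), 0 ≤ M ∧
      (∀ m : ℤ, M ≤ m →
        ((((Finset.Icc (fun _ => (1:ℤ)) (fun _ => m)).filter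
          (fun x : Fin n → ℤ => ∀ e ∈ S, x e.2.1 = x e.1 + e.2.2)).card : ℤ) = q.eval m)) ∧
      (S = ∅ → q = Polynomial.X ^ n) ∧
      ((∃ e ∈ S, e.1 ≠ e.2.1) → q.natDegree ≤ n - 1) := by
  by_cases hS : S = ∅
  · subst hS
    refine ⟨Polynomial.X ^ n, 0, le_refl _, ?_, fun _ => rfl, ?_⟩
    · intro m hm
      rw [Finset.filter_true_of_mem (by simp)]
      rw [Pi.card_Icc]
      simp only [Int.card_Icc, Polynomial.eval_pow, Polynomial.eval_X]
      rw [Finset.prod_const]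
      push_cast
      rw [Int.toNat_of_nonneg (by omega)]
      simp
    · rintro ⟨e, he, -⟩; simp at he
  by_cases hy' : ∃ y : Fin n → ℤ, ∀ e ∈ S, y e.2.1 = y e.1 + e.2.2
  swap
  · refine ⟨0, 0, le_refl _, ?_, fun h => absurd h hS, by simp⟩
    intro m hm
    rw [Finset.filter_false_of_mem (fun x _ hx => hy' ⟨x, hx⟩)]
    simp
  obtain ⟨y, hy⟩ := hy'
  letI st : Setoid (Fin n) :=
    ⟨Relation.EqvGen (fun a b => ∃ g : ℤ, (a, b, g) ∈ S),
      Relation.EqvGen.is_equivalence _⟩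
  letI : Fintype (Quotient st) := @Quotient.fintype _ _ st (Classical.decRel _)
  set cls : Quotient st → Finset (Fin n) :=
    fun q => Finset.univ.filter (fun v => ⟦v⟧ = q) with hcls
  have clsne : ∀ q : Quotient st, (cls q).Nonempty := by
    intro q; exact ⟨q.out, by simp [hcls, Quotient.out_eq]⟩
  set δ : Fin n → ℤ := fun v => y v - y (⟦v⟧ : Quotient st).out with hδ
  set d : Quotient st → ℤ :=
    fun q => (cls q).sup' (clsne q) δ - (cls q).inf' (clsne q) δ with hd
  -- x - y is constant on components
  have hconst : ∀ (x : Fin n → ℤ), (∀ e ∈ S, x e.2.1 = x e.1 + e.2.2) →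
      ∀ u w : Fin n, st.r u w → x u - y u = x w - y w := by
    intro x hx u w h
    induction h with
    | rel a b hab =>
        obtain ⟨g, hg⟩ := hab
        have h1 := hx _ hg
        have h2 := hy _ hg
        simp only at h1 h2
        omega
    | refl => rfl
    | symm _ _ _ ih => omega
    | trans _ _ _ _ _ ih1 ih2 => omega
  have hrep : ∀ (x : Fin n → ℤ), (∀ e ∈ S, x e.2.1 = x e.1 + e.2.2) →
      ∀ v : Fin n, x v = x (⟦v⟧ : Quotient st).out + δ v := by
    intro x hx v
    have hr : st.r v (⟦v⟧ : Quotient st).out :=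
      Quotient.exact (Quotient.out_eq _).symm
    have := hconst x hx v _ hr
    simp only [hδ]
    omega
  have key_card : ∀ m : ℤ,
      ((Finset.Icc (fun _ => (1:ℤ)) (fun _ => m)).filter
        (fun x : Fin n → ℤ => ∀ e ∈ S, x e.2.1 = x e.1 + e.2.2)).card
      = (Finset.Icc (fun q : Quotient st => 1 - (cls q).inf' (clsne q) δ)
          (fun q : Quotient st => m - (cls q).sup' (clsne q) δ)).card := by
    intro m
    refine Finset.card_bij' (fun x _ => fun q : Quotient st => x q.out)
      (fun t _ => fun v : Fin n => t ⟦v⟧ + δ v) ?_ ?_ ?_ ?_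
    · intro x hx
      rw [Finset.mem_filter, Finset.mem_Icc] at hx
      obtain ⟨⟨h1, h2⟩, hsat⟩ := hx
      rw [Pi.le_def] at h1 h2
      rw [Finset.mem_Icc]
      constructor <;> (rw [Pi.le_def]; intro q)
      · have hb : ∀ v ∈ cls q, 1 - x q.out ≤ δ v := by
          intro v hv
          rw [hcls, Finset.mem_filter] at hv
          have hxv := hrep x hsat v
          rw [hv.2] at hxv
          have := h1 v
          omega
        have h9 := Finset.le_inf' (clsne q) δ hb
        show 1 - (cls q).inf' (clsne q) δ ≤ x q.out
        omega
      · have hb : ∀ v ∈ cls q, δ v ≤ m - x q.out := by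
          intro v hv
          rw [hcls, Finset.mem_filter] at hv
          have hxv := hrep x hsat v
          rw [hv.2] at hxv
          have := h2 v
          omega
        have h9 := Finset.sup'_le (clsne q) δ hb
        show x q.out ≤ m - (cls q).sup' (clsne q) δ
        omega
    · intro t ht
      rw [Finset.mem_Icc] at ht
      obtain ⟨h1, h2⟩ := ht
      rw [Pi.le_def] at h1 h2
      rw [Finset.mem_filter, Finset.mem_Icc]
      refine ⟨⟨?_, ?_⟩, ?_⟩
      · rw [Pi.le_def]; intro v
        show (1:ℤ) ≤ t ⟦v⟧ + δ v
        have hv : v ∈ cls ⟦v⟧ := Finset.mem_filter.mpr ⟨Finset.mem_univ v, rfl⟩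
        have ha := Finset.inf'_le δ hv
        have hb := h1 ⟦v⟧
        omega
      · rw [Pi.le_def]; intro v
        show t ⟦v⟧ + δ v ≤ m
        have hv : v ∈ cls ⟦v⟧ := Finset.mem_filter.mpr ⟨Finset.mem_univ v, rfl⟩
        have ha := Finset.le_sup' δ hv
        have hb := h2 ⟦v⟧
        omega
      · intro e he
        have hee : (e.1, e.2.1, e.2.2) ∈ S := by
          simpa using he
        have hij : (⟦e.1⟧ : Quotient st) = ⟦e.2.1⟧ :=
          Quotient.sound (Relation.EqvGen.rel _ _ ⟨e.2.2, hee⟩)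
        have hg := hy _ he
        simp only [hδ, hij]
        omega
    · intro x hx
      rw [Finset.mem_filter] at hx
      funext v
      exact (hrep x hx.2 v).symm
    · intro t ht
      funext q
      have h1 : (⟦q.out⟧ : Quotient st) = q := Quotient.out_eq q
      simp only [hδ, h1]
      omega
  refine ⟨∏ q : Quotient st, (Polynomial.X - Polynomial.C (d q)),
    ((Finset.univ.sup fun q : Quotient st => (d q).toNat : ℕ) : ℤ), by positivity, ?_, ?_, ?_⟩
  · intro m hm
    have hmd : ∀ q : Quotient st, d q ≤ m := by
      intro q
      have h1 : (d q).toNat ≤ Finset.univ.sup fun q : Quotient st => (d q).toNat :=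
        Finset.le_sup (f := fun q : Quotient st => (d q).toNat) (Finset.mem_univ q)
      have h2 := Int.self_le_toNat (d q)
      have h3 : ((d q).toNat : ℤ) ≤ ((Finset.univ.sup fun q : Quotient st => (d q).toNat : ℕ) : ℤ) :=
        Nat.cast_le.mpr h1
      omega
    rw [key_card, Pi.card_Icc]
    simp only [Int.card_Icc]
    rw [Polynomial.eval_prod]
    push_cast
    refine Finset.prod_congr rfl fun q _ => ?_
    have hdq : 0 ≤ d q := by
      obtain ⟨v, hv⟩ := clsne q
      have h1 := Finset.inf'_le δ hv
      have h2 := Finset.le_sup' δ hv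
      simp only [hd]
      omega
    have hqm := hmd q
    have hrw : m - (cls q).sup' (clsne q) δ + 1 - (1 - (cls q).inf' (clsne q) δ) = m - d q := by
      simp only [hd]; ring
    rw [hrw, Int.toNat_of_nonneg (by omega)]
    simp only [Polynomial.eval_sub, Polynomial.eval_X, Polynomial.eval_C]
  · intro h; exact absurd h hS
  · rintro ⟨e, he, hne⟩
    have hND : (∏ q : Quotient st, (Polynomial.X - Polynomial.C (d q))).natDegree
        = Fintype.card (Quotient st) := by
      rw [Polynomial.natDegree_prod _ _ (fun q _ => Polynomial.X_sub_C_ne_zero _)]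
      simp only [Polynomial.natDegree_X_sub_C]
      rw [Finset.sum_const, smul_eq_mul, mul_one, Finset.card_univ]
    rw [hND]
    have hsurj : Function.Surjective (fun v : Fin n => (⟦v⟧ : Quotient st)) :=
      fun q => ⟨q.out, Quotient.out_eq q⟩
    have hninj : ¬ Function.Injective (fun v : Fin n => (⟦v⟧ : Quotient st)) := by
      intro h
      exact hne (h (Quotient.sound (Relation.EqvGen.rel _ _ ⟨e.2.2, by simpa using he⟩)))
    have := Fintype.card_lt_of_surjective_not_injective _ hsurj hninj
    rw [Fintype.card_fin] at this
    omega

/-- **Eventual polynomiality of the lattice-point count.**  For an integral gain graph `E` on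
`{1, …, n}` (`n ≥ 1`), the number of proper colorations with colors in `{1, …, m}`
(equivalently, the number of integer points of `[1, m]^n` on none of the hyperplanes
`x j = x i + g` for `(i, j, g) ∈ E`) agrees, for all sufficiently large `m ≥ M₀ ≥ 0`, with a
monic polynomial of degree `n` with integer coefficients. -/
theorem eventual_polynomiality (n : ℕ) (hn : 1 ≤ n) (E : Finset (GainEdge n))
    (hE : ∀ e ∈ E, e.1 < e.2.1) :
    ∃ p : Polynomial ℤ, p.Monic ∧ p.natDegree = n ∧
      ∃ M₀ : ℤ, 0 ≤ M₀ ∧ ∀ m : ℤ, M₀ ≤ m → (properCount E m : ℤ) = p.eval m := by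
  have hPC : ∀ m : ℤ, properCount E m
      = ((Finset.Icc (fun _ => (1:ℤ)) (fun _ => m)).filter (fun x => ProperFor E x)).card := by
    intro m
    rw [← Nat.card_eq_finsetCard]
    simp only [properCount]
    apply Nat.card_congr
    apply Equiv.subtypeEquivRight
    intro x
    simp only [Finset.mem_filter, Finset.mem_Icc, Pi.le_def]
    constructor
    · rintro ⟨h1, h2⟩; exact ⟨⟨fun v => (h1 v).1, fun v => (h1 v).2⟩, h2⟩
    · rintro ⟨⟨h1, h2⟩, h3⟩; exact ⟨fun v => ⟨h1 v, h2 v⟩, h3⟩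
  have hIE : ∀ m : ℤ,
      ((((Finset.Icc (fun _ => (1:ℤ)) (fun _ => m)).filter (fun x => ProperFor E x)).card : ℕ) : ℤ)
      = ∑ S ∈ E.powerset, (-1 : ℤ) ^ S.card *
          ((((Finset.Icc (fun _ => (1:ℤ)) (fun _ => m)).filter
            (fun x : Fin n → ℤ => ∀ e ∈ S, x e.2.1 = x e.1 + e.2.2)).card : ℕ) : ℤ) := by
    intro m
    set box : Finset (Fin n → ℤ) := Finset.Icc (fun _ => (1:ℤ)) (fun _ => m) with hbox
    have step1 : ∀ S : Finset (GainEdge n),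
        (((box.filter (fun x : Fin n → ℤ => ∀ e ∈ S, x e.2.1 = x e.1 + e.2.2)).card : ℕ) : ℤ)
        = ∑ x ∈ box, (if (∀ e ∈ S, x e.2.1 = x e.1 + e.2.2) then (1:ℤ) else 0) := by
      intro S
      rw [Finset.card_filter]
      push_cast
      rfl
    calc (((box.filter (fun x => ProperFor E x)).card : ℕ) : ℤ)
        = ∑ x ∈ box, (if ProperFor E x then (1:ℤ) else 0) := by
          rw [Finset.card_filter]; push_cast; rfl
      _ = ∑ x ∈ box, ∑ S ∈ E.powerset,
            (-1:ℤ)^S.card * (if (∀ e ∈ S, x e.2.1 = x e.1 + e.2.2) then (1:ℤ) else 0) := ?_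
      _ = ∑ S ∈ E.powerset, (-1:ℤ)^S.card *
            (((box.filter (fun x : Fin n → ℤ => ∀ e ∈ S, x e.2.1 = x e.1 + e.2.2)).card : ℕ) : ℤ) := by
          rw [Finset.sum_comm]
          exact Finset.sum_congr rfl fun S _ => by rw [step1, Finset.mul_sum]
    refine Finset.sum_congr rfl fun x hx => ?_
    set T : Finset (GainEdge n) := E.filter (fun e => x e.2.1 = x e.1 + e.2.2) with hT
    have h1 : ∀ S ∈ E.powerset,
        (-1:ℤ)^S.card * (if (∀ e ∈ S, x e.2.1 = x e.1 + e.2.2) then (1:ℤ) else 0)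
        = (if S ∈ T.powerset then (-1:ℤ)^S.card else 0) := by
      intro S hS
      rw [Finset.mem_powerset] at hS
      by_cases h : ∀ e ∈ S, x e.2.1 = x e.1 + e.2.2
      · rw [if_pos h, if_pos, mul_one]
        rw [Finset.mem_powerset]
        intro e he
        rw [hT, Finset.mem_filter]
        exact ⟨hS he, h e he⟩
      · rw [if_neg h, if_neg, mul_zero]
        rw [Finset.mem_powerset]
        intro hsub
        exact h (fun e he => (Finset.mem_filter.mp (hsub he)).2)
    rw [Finset.sum_congr rfl h1, Finset.sum_ite_mem,
      Finset.inter_eq_right.mpr (Finset.powerset_mono.mpr (Finset.filter_subset _ _)),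
      Finset.sum_powerset_neg_one_pow_card]
    have hTE : T = ∅ ↔ ProperFor E x := by
      rw [hT, Finset.filter_eq_empty_iff]
      exact Iff.rfl
    by_cases hPx : ProperFor E x
    · rw [if_pos (hTE.mpr hPx), if_pos hPx]
    · rw [if_neg (fun h => hPx (hTE.mp h)), if_neg hPx]
  choose q M hM0 hcount hempty hdeg using fun S => key n S
  set p : Polynomial ℤ := ∑ S ∈ E.powerset, Polynomial.C ((-1:ℤ)^S.card) * q S with hp
  have hsplit : p = Polynomial.X ^ n
      + ∑ S ∈ E.powerset.erase ∅, Polynomial.C ((-1:ℤ)^S.card) * q S := by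
    rw [hp, ← Finset.add_sum_erase _ _ (Finset.empty_mem_powerset E)]
    congr 1
    rw [hempty ∅ rfl]
    simp
  have hrest : (∑ S ∈ E.powerset.erase ∅, Polynomial.C ((-1:ℤ)^S.card) * q S).degree
      < ((n : ℕ) : WithBot ℕ) := by
    refine lt_of_le_of_lt (Polynomial.degree_sum_le _ _) ?_
    rw [Finset.sup_lt_iff (by exact_mod_cast WithBot.bot_lt_coe n)]
    intro S hS
    rw [Finset.mem_erase, Finset.mem_powerset] at hS
    obtain ⟨hSne, hSE⟩ := hS
    obtain ⟨e, he⟩ := Finset.nonempty_iff_ne_empty.mpr hSne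
    have hdS : (q S).natDegree ≤ n - 1 := hdeg S ⟨e, he, ne_of_lt (hE e (hSE he))⟩
    calc (Polynomial.C ((-1:ℤ)^S.card) * q S).degree
        ≤ ((Polynomial.C ((-1:ℤ)^S.card) * q S).natDegree : WithBot ℕ) :=
          Polynomial.degree_le_natDegree
      _ ≤ ((q S).natDegree : WithBot ℕ) := by
          exact_mod_cast Polynomial.natDegree_C_mul_le _ _
      _ ≤ ((n - 1 : ℕ) : WithBot ℕ) := by exact_mod_cast hdS
      _ < ((n : ℕ) : WithBot ℕ) := by
          rw [Nat.cast_lt]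
          omega
  have hmonic : p.Monic := by
    rw [hsplit]
    exact Polynomial.monic_X_pow_add hrest
  have hdegp : p.natDegree = n := by
    have hd2 : p.degree = ((n : ℕ) : WithBot ℕ) := by
      rw [hsplit,
        Polynomial.degree_add_eq_left_of_degree_lt (by rwa [Polynomial.degree_X_pow]),
        Polynomial.degree_X_pow]
    exact Polynomial.natDegree_eq_of_degree_eq_some hd2
  refine ⟨p, hmonic, hdegp, ((E.powerset.sup fun S => (M S).toNat : ℕ) : ℤ), by positivity, ?_⟩
  intro m hm
  have hMS : ∀ S ∈ E.powerset, M S ≤ m := by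
    intro S hS
    have h1 : (M S).toNat ≤ E.powerset.sup fun S => (M S).toNat :=
      Finset.le_sup (f := fun S => (M S).toNat) hS
    have h2 := Int.self_le_toNat (M S)
    have h3 : (((M S).toNat : ℕ) : ℤ) ≤ ((E.powerset.sup fun S => (M S).toNat : ℕ) : ℤ) :=
      Nat.cast_le.mpr h1
    omega
  rw [hPC m, hIE m, hp, Polynomial.eval_finset_sum]
  refine Finset.sum_congr rfl fun S hS => ?_
  rw [Polynomial.eval_mul, Polynomial.eval_C, hcount S m (hMS S hS)]
end
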